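/- arXiv:1309.5120 — 5 statements merged into one kernel-verified Lean document; each statement's English description precedes it below -/
import Mathlib

section
/- There exists a universal constant c₁ > 0 (independent of ρ, ℓ and f) with the following property: for every ρ ∈ [0,1], every ℓ ∈ ℕ, and every function f : Ω → ℝ that depends only on the coordinates {η(1),…,η(ℓ)} and satisfies ∫ f dν_σ = 0 for every σ ∈ [0,1], one has the spectral gap inequality ∫ f² dν_ρ ≤ c₁ ℓ² Σ_{x=1}^{ℓ−1} ∫ (∇_{x,x+1} f)² dν_ρ. -/
set_option maxHeartbeats 1000000


open MeasureTheory

/-- Configuration space `Ω = {0,1}^ℤ` (with `Bool` encoding occupation). -/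
abbrev Conf := ℤ → Bool

/-- `ν` is the Bernoulli product measure of density `σ` on `{0,1}^ℤ`: a probability measure
under which the coordinates are i.i.d. with `ν(η(x)=1) = σ`, characterized by its values on
cylinder sets. -/
def IsBernoulliProduct (σ : ℝ) (ν : Measure Conf) : Prop :=
  IsProbabilityMeasure ν ∧
    ∀ (A : Finset ℤ) (b : ℤ → Bool),
      ν {η : Conf | ∀ x ∈ A, η x = b x}
        = ∏ x ∈ A, (if b x then ENNReal.ofReal σ else ENNReal.ofReal (1 - σ))

/-- `f` depends only on the coordinates in `A`. -/
def DependsOnCoords (f : Conf → ℝ) (A : Finset ℤ) : Prop :=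
  ∀ η ξ : Conf, (∀ x ∈ A, η x = ξ x) → f η = f ξ

/-- The configuration obtained from `η` by exchanging the values `η(x)` and `η(x+1)`. -/
def swapBond (x : ℤ) (η : Conf) : Conf :=
  fun z => if z = x then η (x + 1) else if z = x + 1 then η x else η z

namespace SG
open Finset

noncomputable section


/-- swap membership of `x` and `x+1`. -/
def tau (x : ℤ) (A : Finset ℤ) : Finset ℤ := A.image (Equiv.swap x (x+1))

def secS (m k : ℕ) : Finset (Finset ℤ) := (Finset.Icc (1:ℤ) (m:ℤ)).powersetCard k

def chi (x : ℤ) (A : Finset ℤ) : ℝ := if x ∈ A then 1 else 0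

def Dform (m k : ℕ) (g : Finset ℤ → ℝ) : ℝ :=
  ∑ j ∈ Finset.Ico (1:ℤ) (m:ℤ), ∑ A ∈ secS m k, (g (tau j A) - g A)^2

lemma mem_tau {x y : ℤ} {A : Finset ℤ} : y ∈ tau x A ↔ (Equiv.swap x (x+1)) y ∈ A := by
  constructor
  · intro hy
    rcases Finset.mem_image.1 hy with ⟨a, ha, rfl⟩
    simpa using ha
  · intro h
    exact Finset.mem_image.2 ⟨_, h, by simp⟩

lemma tau_tau (x : ℤ) (A : Finset ℤ) : tau x (tau x A) = A := by
  ext y; simp [mem_tau]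

lemma card_tau (x : ℤ) (A : Finset ℤ) : (tau x A).card = A.card :=
  Finset.card_image_of_injective _ (Equiv.injective _)

lemma card_Icc_int (m : ℕ) : (Finset.Icc (1:ℤ) (m:ℤ)).card = m := by
  rw [Int.card_Icc]; omega

lemma card_secS (m k : ℕ) : (secS m k).card = Nat.choose m k := by
  rw [secS, Finset.card_powersetCard, card_Icc_int]

lemma mem_secS {m k : ℕ} {A : Finset ℤ} :
    A ∈ secS m k ↔ A ⊆ Finset.Icc (1:ℤ) (m:ℤ) ∧ A.card = k :=
  Finset.mem_powersetCard

lemma tau_mem_secS {m k : ℕ} {x : ℤ} (h1 : 1 ≤ x) (h2 : x + 1 ≤ (m:ℤ))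
    {A : Finset ℤ} (hA : A ∈ secS m k) : tau x A ∈ secS m k := by
  rw [mem_secS] at hA ⊢
  refine ⟨?_, (card_tau x A).trans hA.2⟩
  intro y hy
  have hyA := hA.1 (mem_tau.1 hy)
  rw [Finset.mem_Icc] at hyA ⊢
  rcases eq_or_ne y x with rfl | hx
  · omega
  · rcases eq_or_ne y (x+1) with rfl | hx1
    · omega
    · rwa [Equiv.swap_apply_of_ne_of_ne hx hx1] at hyA

lemma sum_tau {m k : ℕ} {x : ℤ} (h1 : 1 ≤ x) (h2 : x + 1 ≤ (m:ℤ))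
    (F : Finset ℤ → ℝ) :
    ∑ A ∈ secS m k, F (tau x A) = ∑ A ∈ secS m k, F A := by
  apply Finset.sum_bij' (fun A _ => tau x A) (fun A _ => tau x A)
  · intro A hA; exact tau_mem_secS h1 h2 hA
  · intro A hA; exact tau_mem_secS h1 h2 hA
  · intro A _; exact tau_tau x A
  · intro A _; exact tau_tau x A
  · intro A _; rfl

lemma erase_top (m : ℕ) :
    (Finset.Icc (1:ℤ) ((m:ℤ)+1)).erase ((m:ℤ)+1) = Finset.Icc (1:ℤ) (m:ℤ) := by
  ext z; simp only [Finset.mem_erase, Finset.mem_Icc]; omega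

lemma filter_notin_secS (m k : ℕ) :
    (secS (m+1) k).filter (fun A => ((m:ℤ)+1) ∉ A) = secS m k := by
  ext A
  simp only [Finset.mem_filter, mem_secS]
  push_cast
  constructor
  · rintro ⟨⟨hsub, hcard⟩, hnot⟩
    refine ⟨?_, hcard⟩
    intro z hz
    have h1 := hsub hz
    rw [Finset.mem_Icc] at h1 ⊢
    have : z ≠ (m:ℤ)+1 := fun h => hnot (h ▸ hz)
    omega
  · rintro ⟨hsub, hcard⟩
    have hsub' : A ⊆ Finset.Icc (1:ℤ) ((m:ℤ)+1) := by
      intro z hz; have := hsub hz; rw [Finset.mem_Icc] at this ⊢; omega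
    refine ⟨⟨hsub', hcard⟩, fun hmem => ?_⟩
    have := hsub hmem; rw [Finset.mem_Icc] at this; omega

lemma sum_in (m k : ℕ) (x : ℤ) (hx : x ∈ Finset.Icc (1:ℤ) (m:ℤ)) (hk : 1 ≤ k)
    (F : Finset ℤ → ℝ) :
    ∑ A ∈ (secS m k).filter (fun A => x ∈ A), F A
      = ∑ B ∈ ((Finset.Icc (1:ℤ) (m:ℤ)).erase x).powersetCard (k-1), F (insert x B) := by
  refine Finset.sum_nbij' (fun A => A.erase x) (fun B => insert x B) ?_ ?_ ?_ ?_ ?_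
  · intro A hA
    rw [Finset.mem_filter, mem_secS] at hA
    rw [Finset.mem_powersetCard]
    constructor
    · intro z hz
      rw [Finset.mem_erase] at hz ⊢
      exact ⟨hz.1, hA.1.1 hz.2⟩
    · rw [Finset.card_erase_of_mem hA.2, hA.1.2]
  · intro B hB
    rw [Finset.mem_powersetCard] at hB
    rw [Finset.mem_filter, mem_secS]
    have hxB : x ∉ B := fun h => (Finset.mem_erase.1 (hB.1 h)).1 rfl
    refine ⟨⟨?_, ?_⟩, Finset.mem_insert_self x B⟩
    · intro z hz
      rcases Finset.mem_insert.1 hz with rfl | hz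
      · exact hx
      · exact Finset.mem_of_mem_erase (hB.1 hz)
    · rw [Finset.card_insert_of_notMem hxB, hB.2]; omega
  · intro A hA
    rw [Finset.mem_filter] at hA
    exact Finset.insert_erase hA.2
  · intro B hB
    rw [Finset.mem_powersetCard] at hB
    exact Finset.erase_insert (fun h => (Finset.mem_erase.1 (hB.1 h)).1 rfl)
  · intro A hA
    rw [Finset.mem_filter] at hA
    rw [Finset.insert_erase hA.2]

lemma count_in (m k : ℕ) (x : ℤ) (hx : x ∈ Finset.Icc (1:ℤ) (m:ℤ)) (hk : 1 ≤ k) :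
    ((secS m k).filter (fun A => x ∈ A)).card = Nat.choose (m-1) (k-1) := by
  classical
  have h := sum_in m k x hx hk (fun _ => (1:ℝ))
  rw [Finset.sum_const, Finset.sum_const] at h
  simp only [nsmul_eq_mul, mul_one] at h
  have h2 : ((secS m k).filter (fun A => x ∈ A)).card
      = (((Finset.Icc (1:ℤ) (m:ℤ)).erase x).powersetCard (k-1)).card := by exact_mod_cast h
  rw [h2, Finset.card_powersetCard, Finset.card_erase_of_mem hx, Int.card_Icc]
  congr 1
  omega

lemma count_in_out (m k : ℕ) (x y : ℤ) (hx : x ∈ Finset.Icc (1:ℤ) (m:ℤ))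
    (hy : y ∈ Finset.Icc (1:ℤ) (m:ℤ)) (hxy : x ≠ y) (hk : 1 ≤ k) :
    ((secS m k).filter (fun A => x ∈ A ∧ y ∉ A)).card = Nat.choose (m-2) (k-1) := by
  classical
  have hcard : (((Finset.Icc (1:ℤ) (m:ℤ)).erase x).erase y).card = m - 2 := by
    rw [Finset.card_erase_of_mem, Finset.card_erase_of_mem hx, Int.card_Icc]
    · omega
    · exact Finset.mem_erase.2 ⟨Ne.symm hxy, hy⟩
  rw [← hcard, ← Finset.card_powersetCard]
  refine Finset.card_nbij' (fun A => A.erase x) (fun B => insert x B) ?_ ?_ ?_ ?_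
  · intro A hA
    rw [Finset.mem_coe, Finset.mem_filter, mem_secS] at hA
    rw [Finset.mem_coe, Finset.mem_powersetCard]
    constructor
    · intro z hz
      rw [Finset.mem_erase] at hz
      rw [Finset.mem_erase, Finset.mem_erase]
      have hzy : z ≠ y := fun h => hA.2.2 (h ▸ hz.2)
      exact ⟨hzy, hz.1, hA.1.1 hz.2⟩
    · rw [Finset.card_erase_of_mem hA.2.1, hA.1.2]
  · intro B hB
    rw [Finset.mem_coe, Finset.mem_powersetCard] at hB
    have hxB : x ∉ B := fun h => (Finset.mem_erase.1 (Finset.mem_of_mem_erase (hB.1 h))).1 rfl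
    have hyB : y ∉ B := fun h => (Finset.mem_erase.1 (hB.1 h)).1 rfl
    rw [Finset.mem_coe, Finset.mem_filter, mem_secS]
    refine ⟨⟨?_, ?_⟩, Finset.mem_insert_self x B, ?_⟩
    · intro z hz
      rcases Finset.mem_insert.1 hz with rfl | hz
      · exact hx
      · exact Finset.mem_of_mem_erase (Finset.mem_of_mem_erase (hB.1 hz))
    · rw [Finset.card_insert_of_notMem hxB, hB.2]; omega
    · intro h
      rcases Finset.mem_insert.1 h with h1 | h1
      · exact hxy h1.symm
      · exact hyB h1
  · intro A hA
    rw [Finset.mem_coe, Finset.mem_filter] at hA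
    exact Finset.insert_erase hA.2.1
  · intro B hB
    rw [Finset.mem_coe, Finset.mem_powersetCard] at hB
    exact Finset.erase_insert
      (fun h => (Finset.mem_erase.1 (Finset.mem_of_mem_erase (hB.1 h))).1 rfl)


lemma tele_aux (φ : ℤ → ℝ) : ∀ (n : ℕ) (a : ℤ),
    ∑ j ∈ Finset.Ico a (a + (n:ℤ)), (φ (j+1) - φ j) = φ (a + n) - φ a := by
  intro n
  induction n with
  | zero => intro a; simp
  | succ n ih =>
    intro a
    have hins : Finset.Ico a (a + ((n:ℤ)+1)) = insert (a + n) (Finset.Ico a (a + (n:ℤ))) := by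
      ext z; simp only [Finset.mem_insert, Finset.mem_Ico]; omega
    push_cast
    rw [hins, Finset.sum_insert (by simp)]
    push_cast at ih
    rw [ih a]
    ring_nf

lemma tele (φ : ℤ → ℝ) (a b : ℤ) (hab : a ≤ b) :
    ∑ j ∈ Finset.Ico a b, (φ (j+1) - φ j) = φ b - φ a := by
  have h : b = a + ((b - a).toNat : ℤ) := by omega
  rw [h, tele_aux φ (b-a).toNat a]

lemma sumsq (m : ℕ) :
    ∑ j ∈ Finset.Ico (1:ℤ) ((m:ℤ)+1), (j:ℝ)^2 = m*(m+1)*(2*m+1)/6 := by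
  induction m with
  | zero => simp
  | succ n ih =>
    have hins : Finset.Ico (1:ℤ) (((n:ℤ)+1)+1) = insert ((n:ℤ)+1) (Finset.Ico 1 ((n:ℤ)+1)) := by
      ext z; simp only [Finset.mem_insert, Finset.mem_Ico]; omega
    push_cast
    rw [hins, Finset.sum_insert (by simp), ih]
    push_cast
    ring

lemma tri (M : ℤ) (hM : 1 ≤ M) (F : ℤ → ℝ) :
    ∑ x ∈ Finset.Icc 1 M, ∑ j ∈ Finset.Ico x M, F j
      = ∑ j ∈ Finset.Ico 1 M, (j:ℝ) * F j := by
  have h1 : ∀ x ∈ Finset.Icc (1:ℤ) M, ∑ j ∈ Finset.Ico x M, F j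
      = ∑ j ∈ Finset.Ico (1:ℤ) M, if x ≤ j then F j else 0 := by
    intro x hx
    rw [Finset.mem_Icc] at hx
    have : Finset.Ico x M = (Finset.Ico (1:ℤ) M).filter (fun j => x ≤ j) := by
      ext z; simp only [Finset.mem_filter, Finset.mem_Ico]; omega
    rw [this, Finset.sum_filter]
  rw [Finset.sum_congr rfl h1, Finset.sum_comm]
  apply Finset.sum_congr rfl
  intro j hj
  rw [Finset.mem_Ico] at hj
  rw [← Finset.sum_filter]
  have h3 : (Finset.Icc (1:ℤ) M).filter (fun x => x ≤ j) = Finset.Icc 1 j := by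
    ext z; simp only [Finset.mem_filter, Finset.mem_Icc]; omega
  rw [h3, Finset.sum_const, Int.card_Icc, nsmul_eq_mul]
  congr 1
  rw [show j + 1 - 1 = j from by ring]
  exact_mod_cast congrArg (fun z : ℤ => (z:ℝ)) (Int.toNat_of_nonneg (by omega : (0:ℤ) ≤ j))

lemma choose_id3R (m k : ℕ) (hk : 1 ≤ k) :
    ((m:ℝ)+1) * Nat.choose m (k-1) = k * Nat.choose (m+1) k := by
  obtain ⟨k', rfl⟩ : ∃ k', k = k'+1 := ⟨k-1, by omega⟩
  simp only [Nat.add_sub_cancel]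
  have h1 := congrArg (Nat.cast (R := ℝ)) (Nat.add_one_mul_choose_eq m k')
  push_cast [Nat.succ_eq_add_one] at h1
  push_cast
  linear_combination h1

lemma choose_id2R (m k : ℕ) (hm : 1 ≤ m) (hk : 1 ≤ k) :
    (m:ℝ) * (Nat.choose (m+1) k * Nat.choose (m-1) (k-1))
      = ((m:ℝ)+1) * (Nat.choose m k * Nat.choose m (k-1)) := by
  obtain ⟨k', rfl⟩ : ∃ k', k = k'+1 := ⟨k-1, by omega⟩
  obtain ⟨m', rfl⟩ : ∃ m', m = m'+1 := ⟨m-1, by omega⟩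
  simp only [Nat.add_sub_cancel]
  have h1 := congrArg (Nat.cast (R := ℝ)) (Nat.add_one_mul_choose_eq m' k')
  have h2 := congrArg (Nat.cast (R := ℝ)) (Nat.add_one_mul_choose_eq (m'+1) k')
  push_cast [Nat.succ_eq_add_one] at h1 h2
  push_cast
  linear_combination (Nat.choose (m'+1+1) (k'+1) : ℝ) * h1
    - (Nat.choose (m'+1) (k'+1) : ℝ) * h2

lemma pascalR (m k : ℕ) (hk : 1 ≤ k) :
    (Nat.choose (m+1) k : ℝ) = Nat.choose m (k-1) + Nat.choose m k := by
  obtain ⟨k', rfl⟩ : ∃ k', k = k'+1 := ⟨k-1, by omega⟩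
  simp only [Nat.add_sub_cancel]
  rw [Nat.choose_succ_succ]
  push_cast
  ring



lemma Dform_nonneg (m k : ℕ) (g : Finset ℤ → ℝ) : 0 ≤ Dform m k g := by
  apply Finset.sum_nonneg; intro j _
  apply Finset.sum_nonneg; intro A _
  positivity

lemma sum_split (m k : ℕ) (hk : 1 ≤ k) (F : Finset ℤ → ℝ) :
    ∑ A ∈ secS (m+1) k, F A
      = ∑ B ∈ secS m (k-1), F (insert ((m:ℤ)+1) B) + ∑ A ∈ secS m k, F A := by
  classical
  rw [← Finset.sum_filter_add_sum_filter_not (secS (m+1) k) (fun A => ((m:ℤ)+1) ∈ A) F]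
  congr 1
  · have hmem : ((m:ℤ)+1) ∈ Finset.Icc (1:ℤ) ((m+1:ℕ):ℤ) := by
      rw [Finset.mem_Icc]; push_cast; omega
    rw [sum_in (m+1) k ((m:ℤ)+1) hmem hk F]
    apply Finset.sum_congr _ (fun _ _ => rfl)
    congr 1
    rw [show (((m+1:ℕ)):ℤ) = (m:ℤ)+1 by push_cast; ring]
    exact erase_top m
  · rw [filter_notin_secS m k]

lemma tau_insert_top (m : ℕ) (j : ℤ) (h1 : 1 ≤ j) (h2 : j + 1 ≤ (m:ℤ)) (B : Finset ℤ) :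
    tau j (insert ((m:ℤ)+1) B) = insert ((m:ℤ)+1) (tau j B) := by
  unfold tau
  rw [Finset.image_insert]
  congr 1
  exact Equiv.swap_apply_of_ne_of_ne (by omega) (by omega)

lemma chisum (m k : ℕ) (A : Finset ℤ) (hA : A ∈ secS m k) :
    ∑ x ∈ Finset.Icc (1:ℤ) (m:ℤ), chi x A = k := by
  rw [mem_secS] at hA
  unfold chi
  rw [Finset.sum_boole, Finset.filter_mem_eq_inter, Finset.inter_eq_right.2 hA.1, hA.2]

lemma chicount (m k : ℕ) (j : ℤ) (hj : 1 ≤ j) (hj2 : j + 1 ≤ (m:ℤ)) (hk : 1 ≤ k) :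
    ∑ A ∈ secS m k, (chi (j+1) A - chi j A)^2 = 2 * (Nat.choose (m-2) (k-1) : ℝ) := by
  classical
  have hjm : j ∈ Finset.Icc (1:ℤ) (m:ℤ) := by rw [Finset.mem_Icc]; omega
  have hj1m : j+1 ∈ Finset.Icc (1:ℤ) (m:ℤ) := by rw [Finset.mem_Icc]; omega
  have hpt : ∀ A : Finset ℤ, (chi (j+1) A - chi j A)^2
      = (if j ∈ A ∧ j+1 ∉ A then (1:ℝ) else 0) + (if j+1 ∈ A ∧ j ∉ A then (1:ℝ) else 0) := by
    intro A
    by_cases h1 : j ∈ A <;> by_cases h2 : j+1 ∈ A <;> simp [chi, h1, h2]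
  rw [Finset.sum_congr rfl (fun A _ => hpt A), Finset.sum_add_distrib,
    Finset.sum_boole, Finset.sum_boole]
  rw [count_in_out m k j (j+1) hjm hj1m (by omega) hk,
    count_in_out m k (j+1) j hj1m hjm (by omega) hk]
  ring

lemma Dform_le (m k : ℕ) (hm : 1 ≤ m) (hk : 1 ≤ k) (g : Finset ℤ → ℝ) :
    Dform m k g + Dform m (k-1) (fun B => g (insert ((m:ℤ)+1) B)) ≤ Dform (m+1) k g := by
  unfold Dform
  have hins : Finset.Ico (1:ℤ) ((m+1:ℕ):ℤ) = insert (m:ℤ) (Finset.Ico 1 (m:ℤ)) := by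
    ext z; simp only [Finset.mem_insert, Finset.mem_Ico]; push_cast; omega
  rw [hins, Finset.sum_insert (by simp)]
  have hsplit : ∀ j ∈ Finset.Ico (1:ℤ) (m:ℤ),
      ∑ A ∈ secS (m+1) k, (g (tau j A) - g A)^2
        = ∑ B ∈ secS m (k-1), (g (insert ((m:ℤ)+1) (tau j B)) - g (insert ((m:ℤ)+1) B))^2
          + ∑ A ∈ secS m k, (g (tau j A) - g A)^2 := by
    intro j hj
    rw [Finset.mem_Ico] at hj
    rw [sum_split m k hk (fun A => (g (tau j A) - g A)^2)]
    congr 1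
    apply Finset.sum_congr rfl
    intro B _
    rw [tau_insert_top m j hj.1 (by omega) B]
  rw [Finset.sum_congr rfl hsplit, Finset.sum_add_distrib]
  have h0 : (0:ℝ) ≤ ∑ A ∈ secS (m+1) k, (g (tau (m:ℤ) A) - g A)^2 :=
    Finset.sum_nonneg (fun A _ => sq_nonneg _)
  linarith [le_refl (0:ℝ)]


lemma sum_sq_nonneg' (s : Finset (Finset ℤ)) (h : Finset ℤ → ℝ) :
    0 ≤ ∑ A ∈ s, (h A)^2 := Finset.sum_nonneg (fun A _ => sq_nonneg _)

theorem core : ∀ (m : ℕ) (k : ℕ) (g : Finset ℤ → ℝ),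
    ((secS m k).card : ℝ) * (∑ A ∈ secS m k, (g A)^2) - (∑ A ∈ secS m k, g A)^2
      ≤ ((m:ℝ)^2 / 12) * ((secS m k).card : ℝ) * Dform m k g := by
  intro m
  induction m with
  | zero =>
    intro k g
    have hempty : Finset.Icc (1:ℤ) ((0:ℕ):ℤ) = ∅ := by
      apply Finset.Icc_eq_empty; intro h; omega
    cases k with
    | zero =>
      have hsec : secS 0 0 = {∅} := by unfold secS; rw [hempty]; simp
      have hD : (0:ℝ) ≤ Dform 0 0 g := Dform_nonneg 0 0 g
      rw [hsec]
      simp only [Finset.card_singleton, Finset.sum_singleton, Nat.cast_one]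
      nlinarith [hD]
    | succ k =>
      have hsec : secS 0 (k+1) = ∅ := by
        unfold secS
        apply Finset.powersetCard_eq_empty.2
        rw [hempty]; simp
      rw [hsec]
      simp [Dform_nonneg]
  | succ m ih =>
    intro k g
    have hDF0 : (0 : ℝ) ≤ Dform (m+1) k g := Dform_nonneg (m+1) k g
    rcases Nat.eq_zero_or_pos k with rfl | hk1
    · -- k = 0
      have hsec : secS (m+1) 0 = {∅} := Finset.powersetCard_zero _
      rw [hsec]
      simp only [Finset.card_singleton, Finset.sum_singleton, Nat.cast_one]
      nlinarith [hDF0]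
    rcases lt_or_ge m (k) with hbig | hkm
    · -- k ≥ m+1
      rcases Nat.lt_or_ge (m+1) k with hbig2 | hle
      · have hsec : secS (m+1) k = ∅ := by
          apply Finset.powersetCard_eq_empty.2
          rw [card_Icc_int]; exact hbig2
        rw [hsec]; simp
      · -- k = m+1
        have hk : k = m+1 := by omega
        subst hk
        have hsec : secS (m+1) (m+1) = {Finset.Icc (1:ℤ) ((m+1:ℕ):ℤ)} := by
          have h := Finset.powersetCard_self (Finset.Icc (1:ℤ) ((m+1:ℕ):ℤ))
          rw [card_Icc_int] at h
          exact h
        rw [hsec]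
        simp only [Finset.card_singleton, Finset.sum_singleton, Nat.cast_one]
        nlinarith [hDF0]
    -- main case : 1 ≤ k ≤ m
    have hm1 : 1 ≤ m := le_trans hk1 hkm
    set n0 : ℝ := (Nat.choose m k : ℝ) with hn0def
    set n1 : ℝ := (Nat.choose m (k-1) : ℝ) with hn1def
    set nn : ℝ := (Nat.choose (m+1) k : ℝ) with hnndef
    set Rh : ℝ := (Nat.choose (m-1) (k-1) : ℝ) with hRhdef
    have hn0pos : (0:ℝ) < n0 := by
      rw [hn0def]; exact_mod_cast Nat.choose_pos hkm
    have hn1pos : (0:ℝ) < n1 := by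
      rw [hn1def]; exact_mod_cast Nat.choose_pos (by omega : k-1 ≤ m)
    have hnnpos : (0:ℝ) < nn := by
      rw [hnndef]; exact_mod_cast Nat.choose_pos (by omega : k ≤ m+1)
    have hRh0 : (0:ℝ) ≤ Rh := by rw [hRhdef]; positivity
    have hpascal : nn = n1 + n0 := pascalR m k hk1
    have hid3 : ((m:ℝ)+1) * n1 = (k:ℝ) * nn := choose_id3R m k hk1
    have hid2 : (m:ℝ) * (nn * Rh) = ((m:ℝ)+1) * (n0 * n1) := by
      have := choose_id2R m k hm1 hk1
      rw [hn0def, hn1def, hnndef, hRhdef]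
      linarith [this]
    set T0 : ℝ := ∑ A ∈ secS m k, g A with hT0def
    set U0 : ℝ := ∑ A ∈ secS m k, (g A)^2 with hU0def
    set T1 : ℝ := ∑ B ∈ secS m (k-1), g (insert ((m:ℤ)+1) B) with hT1def
    set U1 : ℝ := ∑ B ∈ secS m (k-1), (g (insert ((m:ℤ)+1) B))^2 with hU1def
    have hT : ∑ A ∈ secS (m+1) k, g A = T1 + T0 := sum_split m k hk1 g
    have hU : ∑ A ∈ secS (m+1) k, (g A)^2 = U1 + U0 :=
      sum_split m k hk1 (fun A => (g A)^2)
    set D0 : ℝ := Dform m k g with hD0def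
    set D1 : ℝ := Dform m (k-1) (fun B => g (insert ((m:ℤ)+1) B)) with hD1def
    set DF : ℝ := Dform (m+1) k g with hDFdef
    have hDsplit : D0 + D1 ≤ DF := Dform_le m k hm1 hk1 g
    have hD0nn : (0:ℝ) ≤ D0 := Dform_nonneg m k g
    have hD1nn : (0:ℝ) ≤ D1 := Dform_nonneg m (k-1) _
    have hIH0 : n0 * U0 - T0^2 ≤ ((m:ℝ)^2/12) * n0 * D0 := by
      have h := ih k g
      rw [card_secS m k] at h
      exact h
    have hIH1 : n1 * U1 - T1^2 ≤ ((m:ℝ)^2/12) * n1 * D1 := by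
      have h := ih (k-1) (fun B => g (insert ((m:ℤ)+1) B))
      rw [card_secS m (k-1)] at h
      exact h
    -- the bond averages
    set Bf : ℤ → ℝ := fun j => ∑ A ∈ secS (m+1) k, g A * (chi (j+1) A - chi j A) with hBfdef
    -- per-bond Cauchy-Schwarz
    have hK1 : ∀ j ∈ Finset.Ico (1:ℤ) ((m:ℤ)+1),
        (Bf j)^2 ≤ (Rh/2) * ∑ A ∈ secS (m+1) k, (g (tau j A) - g A)^2 := by
      intro j hj
      rw [Finset.mem_Ico] at hj
      have hj1 : (1:ℤ) ≤ j := hj.1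
      have hj2 : j + 1 ≤ ((m+1:ℕ):ℤ) := by push_cast; omega
      have hrev : Bf j = ∑ A ∈ secS (m+1) k, g (tau j A) * (chi j A - chi (j+1) A) := by
        simp only [hBfdef]
        rw [← sum_tau hj1 hj2 (fun A => g A * (chi (j+1) A - chi j A))]
        apply Finset.sum_congr rfl
        intro A _
        have e1 : chi (j+1) (tau j A) = chi j A := by
          unfold chi
          congr 1
          simp only [mem_tau, Equiv.swap_apply_right, eq_iff_iff]
        have e2 : chi j (tau j A) = chi (j+1) A := by
          unfold chi
          congr 1
          simp only [mem_tau, Equiv.swap_apply_left, eq_iff_iff]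
        rw [e1, e2]
      have h2B : 2 * Bf j = ∑ A ∈ secS (m+1) k,
          (g A - g (tau j A)) * (chi (j+1) A - chi j A) := by
        rw [two_mul]
        nth_rewrite 2 [hrev]
        simp only [hBfdef]
        rw [← Finset.sum_add_distrib]
        apply Finset.sum_congr rfl
        intro A _
        ring
      have hCS := Finset.sum_mul_sq_le_sq_mul_sq (secS (m+1) k)
        (fun A => g A - g (tau j A)) (fun A => chi (j+1) A - chi j A)
      rw [← h2B] at hCS
      have hchi : ∑ A ∈ secS (m+1) k, (chi (j+1) A - chi j A)^2 = 2 * Rh := by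
        have hmm : m+1-2 = m-1 := by omega
        rw [chicount (m+1) k j hj1 hj2 hk1, hmm, hRhdef]
      have hsq : ∑ A ∈ secS (m+1) k, (g A - g (tau j A))^2
          = ∑ A ∈ secS (m+1) k, (g (tau j A) - g A)^2 := by
        apply Finset.sum_congr rfl; intro A _; ring
      rw [hchi, hsq] at hCS
      linarith [hCS]
    -- telescoping identity
    have hxsum : ∑ x ∈ Finset.Icc (1:ℤ) ((m:ℤ)+1),
        (∑ A ∈ secS (m+1) k, g A * (chi ((m:ℤ)+1) A - chi x A))
        = ∑ j ∈ Finset.Ico (1:ℤ) ((m:ℤ)+1), (j:ℝ) * Bf j := by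
      have hinner : ∀ x ∈ Finset.Icc (1:ℤ) ((m:ℤ)+1),
          ∑ A ∈ secS (m+1) k, g A * (chi ((m:ℤ)+1) A - chi x A)
            = ∑ j ∈ Finset.Ico x ((m:ℤ)+1), Bf j := by
        intro x hx
        rw [Finset.mem_Icc] at hx
        have hcalc : ∀ A ∈ secS (m+1) k, g A * (chi ((m:ℤ)+1) A - chi x A)
            = ∑ j ∈ Finset.Ico x ((m:ℤ)+1), g A * (chi (j+1) A - chi j A) := by
          intro A _
          rw [← Finset.mul_sum]
          congr 1
          rw [tele (fun j => chi j A) x ((m:ℤ)+1) hx.2]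
        rw [Finset.sum_congr rfl hcalc, Finset.sum_comm]
      rw [Finset.sum_congr rfl hinner]
      exact tri ((m:ℤ)+1) (by omega) Bf
    -- value of the x-sum
    have hval : ∑ x ∈ Finset.Icc (1:ℤ) ((m:ℤ)+1),
        (∑ A ∈ secS (m+1) k, g A * (chi ((m:ℤ)+1) A - chi x A))
        = ((m:ℝ)+1) * T1 - (k:ℝ) * (T1 + T0) := by
      rw [Finset.sum_comm]
      have hA : ∀ A ∈ secS (m+1) k,
          ∑ x ∈ Finset.Icc (1:ℤ) ((m:ℤ)+1), g A * (chi ((m:ℤ)+1) A - chi x A)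
            = ((m:ℝ)+1) * (g A * chi ((m:ℤ)+1) A) - (k:ℝ) * g A := by
        intro A hA
        rw [← Finset.mul_sum, Finset.sum_sub_distrib, Finset.sum_const]
        have hch : ∑ x ∈ Finset.Icc (1:ℤ) ((m:ℤ)+1), chi x A = (k:ℝ) := by
          have := chisum (m+1) k A hA
          rw [show (((m+1:ℕ)):ℤ) = (m:ℤ)+1 by push_cast; ring] at this
          exact this
        rw [hch, Int.card_Icc, nsmul_eq_mul]
        have hcard : ((((m:ℤ)+1+1-1).toNat : ℕ) : ℝ) = (m:ℝ)+1 := by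
          rw [show (m:ℤ)+1+1-1 = (m:ℤ)+1 by ring]
          rw [show ((m:ℤ)+1).toNat = m+1 by omega]
          push_cast; ring
        rw [hcard]
        ring
      rw [Finset.sum_congr rfl hA, Finset.sum_sub_distrib, ← Finset.mul_sum, ← Finset.mul_sum]
      have hT1' : ∑ A ∈ secS (m+1) k, g A * chi ((m:ℤ)+1) A = T1 := by
        rw [sum_split m k hk1 (fun A => g A * chi ((m:ℤ)+1) A), hT1def]
        have e1 : ∀ B ∈ secS m (k-1),
            g (insert ((m:ℤ)+1) B) * chi ((m:ℤ)+1) (insert ((m:ℤ)+1) B)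
              = g (insert ((m:ℤ)+1) B) := by
          intro B _
          unfold chi
          rw [if_pos (Finset.mem_insert_self _ _), mul_one]
        have e2 : ∀ A ∈ secS m k, g A * chi ((m:ℤ)+1) A = 0 := by
          intro A hA
          rw [mem_secS] at hA
          have : ((m:ℤ)+1) ∉ A := by
            intro hmem
            have := hA.1 hmem
            rw [Finset.mem_Icc] at this
            omega
          unfold chi
          rw [if_neg this, mul_zero]
        rw [Finset.sum_congr rfl e1, Finset.sum_congr rfl e2, Finset.sum_const, smul_zero,
          add_zero]
      rw [hT1', hT]
    -- the Cauchy-Schwarz over bonds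
    have hG2 : (((m:ℝ)+1) * T1 - (k:ℝ) * (T1 + T0))^2
        ≤ ((m:ℝ)*((m:ℝ)+1)*(2*(m:ℝ)+1)/6) * ((Rh/2) * DF) := by
      rw [← hval, hxsum]
      have hCS := Finset.sum_mul_sq_le_sq_mul_sq (Finset.Ico (1:ℤ) ((m:ℤ)+1))
        (fun j => (j:ℝ)) Bf
      have hs1 : ∑ j ∈ Finset.Ico (1:ℤ) ((m:ℤ)+1), ((j:ℝ))^2
          = (m:ℝ)*((m:ℝ)+1)*(2*(m:ℝ)+1)/6 := by
        have := sumsq m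
        push_cast at this ⊢
        exact this
      have hs2 : ∑ j ∈ Finset.Ico (1:ℤ) ((m:ℤ)+1), (Bf j)^2 ≤ (Rh/2) * DF := by
        calc ∑ j ∈ Finset.Ico (1:ℤ) ((m:ℤ)+1), (Bf j)^2
            ≤ ∑ j ∈ Finset.Ico (1:ℤ) ((m:ℤ)+1),
                (Rh/2) * ∑ A ∈ secS (m+1) k, (g (tau j A) - g A)^2 :=
              Finset.sum_le_sum hK1
          _ = (Rh/2) * DF := by
              have hDFalt : DF = ∑ j ∈ Finset.Ico (1:ℤ) ((m:ℤ)+1),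
                  ∑ A ∈ secS (m+1) k, (g (tau j A) - g A)^2 := by
                rw [hDFdef]; unfold Dform; norm_num
              rw [← Finset.mul_sum, hDFalt]
      calc (∑ j ∈ Finset.Ico (1:ℤ) ((m:ℤ)+1), (j:ℝ) * Bf j)^2
          ≤ (∑ j ∈ Finset.Ico (1:ℤ) ((m:ℤ)+1), ((j:ℝ))^2)
            * ∑ j ∈ Finset.Ico (1:ℤ) ((m:ℤ)+1), (Bf j)^2 := hCS
        _ ≤ ((m:ℝ)*((m:ℝ)+1)*(2*(m:ℝ)+1)/6) * ((Rh/2) * DF) := by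
            rw [hs1]
            apply mul_le_mul_of_nonneg_left hs2
            positivity
    -- the K-relation + coefficient identity
    have hKrel : ((m:ℝ)+1) * (n0*T1 - n1*T0)
        = nn * (((m:ℝ)+1) * T1 - (k:ℝ) * (T1 + T0)) := by
      have h1 : n0*T1 - n1*T0 = nn*T1 - n1*(T1+T0) := by rw [hpascal]; ring
      calc ((m:ℝ)+1) * (n0*T1 - n1*T0)
          = ((m:ℝ)+1)*nn*T1 - (((m:ℝ)+1)*n1)*(T1+T0) := by rw [h1]; ring
        _ = ((m:ℝ)+1)*nn*T1 - ((k:ℝ)*nn)*(T1+T0) := by rw [hid3]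
        _ = nn * (((m:ℝ)+1) * T1 - (k:ℝ) * (T1 + T0)) := by ring
    have hK2 : (n0*T1 - n1*T0)^2 ≤ ((2*(m:ℝ)+1)/12) * nn * n0 * n1 * DF := by
      have hM2 : (((m:ℝ)+1))^2 * (n0*T1 - n1*T0)^2
          = nn^2 * (((m:ℝ)+1) * T1 - (k:ℝ) * (T1 + T0))^2 := by
        have := congrArg (fun z : ℝ => z^2) hKrel
        simpa [mul_pow] using this
      have hcoef : nn^2 * (((m:ℝ)*((m:ℝ)+1)*(2*(m:ℝ)+1)/6) * (Rh/2))
          = ((2*(m:ℝ)+1)/12) * nn * n0 * n1 * (((m:ℝ)+1))^2 := by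
        linear_combination (nn * ((m:ℝ)+1) * (2*(m:ℝ)+1) / 12) * hid2
      have hstep : (((m:ℝ)+1))^2 * (n0*T1 - n1*T0)^2
          ≤ (((m:ℝ)+1))^2 * (((2*(m:ℝ)+1)/12) * nn * n0 * n1 * DF) := by
        calc (((m:ℝ)+1))^2 * (n0*T1 - n1*T0)^2
            = nn^2 * (((m:ℝ)+1) * T1 - (k:ℝ) * (T1 + T0))^2 := hM2
          _ ≤ nn^2 * (((m:ℝ)*((m:ℝ)+1)*(2*(m:ℝ)+1)/6) * ((Rh/2) * DF)) := by
              apply mul_le_mul_of_nonneg_left hG2 (sq_nonneg nn)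
          _ = (((m:ℝ)+1))^2 * (((2*(m:ℝ)+1)/12) * nn * n0 * n1 * DF) := by
              linear_combination DF * hcoef
      have hpos : (0:ℝ) < (((m:ℝ)+1))^2 := by positivity
      exact le_of_mul_le_mul_left hstep hpos
    -- ANOVA
    have hANOVA : n0*n1*(nn*(U1+U0) - (T1+T0)^2)
        = nn*n1*(n0*U0 - T0^2) + nn*n0*(n1*U1 - T1^2) + (n0*T1 - n1*T0)^2 := by
      rw [hpascal]; ring
    -- assemble
    have hfinal : n0*n1*(nn*(U1+U0) - (T1+T0)^2)
        ≤ n0*n1*((((m:ℝ)+1)^2/12) * nn * DF) := by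
      rw [hANOVA]
      have e0 : nn*n1*(n0*U0 - T0^2) ≤ nn*n1*(((m:ℝ)^2/12)*n0*D0) :=
        mul_le_mul_of_nonneg_left hIH0 (by positivity)
      have e1 : nn*n0*(n1*U1 - T1^2) ≤ nn*n0*(((m:ℝ)^2/12)*n1*D1) :=
        mul_le_mul_of_nonneg_left hIH1 (by positivity)
      have e3 : ((m:ℝ)^2/12) * (nn*n0*n1) * (D0 + D1) ≤ ((m:ℝ)^2/12) * (nn*n0*n1) * DF := by
        apply mul_le_mul_of_nonneg_left hDsplit
        positivity
      have e4 : nn*n1*(((m:ℝ)^2/12)*n0*D0) + nn*n0*(((m:ℝ)^2/12)*n1*D1)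
          = ((m:ℝ)^2/12)*(nn*n0*n1)*(D0+D1) := by ring
      have e5 : ((m:ℝ)^2/12)*(nn*n0*n1)*DF + ((2*(m:ℝ)+1)/12)*nn*n0*n1*DF
          = n0*n1*((((m:ℝ)+1)^2/12)*nn*DF) := by ring
      linarith [hK2, e0, e1, e3, e4, e5]
    have hcancel : nn*(U1+U0) - (T1+T0)^2 ≤ (((m:ℝ)+1)^2/12) * nn * DF := by
      have hpos : (0:ℝ) < n0*n1 := mul_pos hn0pos hn1pos
      exact le_of_mul_le_mul_left (by linarith [hfinal]) hpos
    -- conclude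
    rw [hT, hU, card_secS (m+1) k]
    calc (↑((m+1).choose k) : ℝ) * (U1+U0) - (T1+T0)^2
        = nn*(U1+U0) - (T1+T0)^2 := by rw [hnndef]
      _ ≤ (((m:ℝ)+1)^2/12) * nn * DF := hcancel
      _ = ((↑(m+1):ℝ)^2/12) * (↑((m+1).choose k) : ℝ) * Dform (m+1) k g := by
          rw [hnndef, hDFdef]
          push_cast
          ring

def confOf (A : Finset ℤ) : Conf := fun z => decide (z ∈ A)

def cyl (m : ℕ) (A : Finset ℤ) : Set Conf :=
  {η : Conf | ∀ x ∈ Finset.Icc (1:ℤ) (m:ℤ), η x = confOf A x}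

lemma measurable_cyl (m : ℕ) (A : Finset ℤ) : MeasurableSet (cyl m A) := by
  have h : cyl m A = ⋂ x ∈ (Finset.Icc (1:ℤ) (m:ℤ)), {η : Conf | η x = confOf A x} := by
    ext η; simp [cyl]
  rw [h]
  refine MeasurableSet.biInter (Finset.Icc (1:ℤ) (m:ℤ)).countable_toSet (fun x _ => ?_)
  have : {η : Conf | η x = confOf A x} = (fun η : Conf => η x) ⁻¹' {confOf A x} := by
    ext η; simp
  rw [this]
  exact (measurable_pi_apply x) (measurableSet_singleton _)

lemma swapBond_eq (x : ℤ) (η : Conf) :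
    swapBond x η = fun z => η (Equiv.swap x (x+1) z) := by
  funext z
  unfold swapBond
  rcases eq_or_ne z x with rfl | h1
  · rw [if_pos rfl, Equiv.swap_apply_left]
  · rcases eq_or_ne z (x+1) with rfl | h2
    · rw [if_neg h1, if_pos rfl, Equiv.swap_apply_right]
    · rw [if_neg h1, if_neg h2, Equiv.swap_apply_of_ne_of_ne h1 h2]

lemma swapBond_confOf (x : ℤ) (A : Finset ℤ) :
    swapBond x (confOf A) = confOf (tau x A) := by
  rw [swapBond_eq]
  funext z
  unfold confOf
  have : z ∈ tau x A ↔ Equiv.swap x (x+1) z ∈ A := mem_tau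
  simp only [decide_eq_decide]
  exact this.symm

lemma expand (m : ℕ) (h : Conf → ℝ) (hdep : DependsOnCoords h (Finset.Icc (1:ℤ) (m:ℤ)))
    (η : Conf) :
    h η = ∑ A ∈ (Finset.Icc (1:ℤ) (m:ℤ)).powerset,
      (cyl m A).indicator (fun _ => h (confOf A)) η := by
  classical
  set W := Finset.Icc (1:ℤ) (m:ℤ) with hW
  set A₀ := W.filter (fun x => η x = true) with hA₀
  have hA₀mem : A₀ ∈ W.powerset := Finset.mem_powerset.2 (Finset.filter_subset _ _)
  rw [Finset.sum_eq_single A₀]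
  · have hcylmem : η ∈ cyl m A₀ := by
      intro x hx
      unfold confOf
      rw [hA₀]
      simp only [Finset.mem_filter]
      rcases Bool.eq_false_or_eq_true (η x) with hf | ht
      · rw [hf]; simp [hx, hf, hW]
      · rw [ht]; simp [hx, ht]
    rw [Set.indicator_of_mem hcylmem]
    exact hdep η (confOf A₀) hcylmem
  · intro B hB hne
    apply Set.indicator_of_notMem
    intro hmem
    apply hne
    ext z
    rw [Finset.mem_powerset] at hB
    constructor
    · intro hz
      have hzW : z ∈ W := hB hz
      rw [hA₀, Finset.mem_filter]
      refine ⟨hzW, ?_⟩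
      have := hmem z hzW
      unfold confOf at this
      rw [this]
      simp [hz]
    · intro hz
      rw [hA₀, Finset.mem_filter] at hz
      have := hmem z hz.1
      unfold confOf at this
      rw [hz.2] at this
      simpa using this.symm
  · intro habs
    exact absurd hA₀mem habs

def wgt (σ : ℝ) (m : ℕ) (A : Finset ℤ) : ℝ :=
  ∏ x ∈ Finset.Icc (1:ℤ) (m:ℤ), (if x ∈ A then σ else 1 - σ)

lemma wgt_nonneg {σ : ℝ} (hσ : σ ∈ Set.Icc (0:ℝ) 1) (m : ℕ) (A : Finset ℤ) :
    0 ≤ wgt σ m A := by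
  apply Finset.prod_nonneg
  intro x _
  rcases hσ with ⟨h0, h1⟩
  split <;> linarith

lemma cyl_measure {σ : ℝ} {ν : Measure Conf} (hb : IsBernoulliProduct σ ν)
    (hσ : σ ∈ Set.Icc (0:ℝ) 1) (m : ℕ) (A : Finset ℤ) :
    (ν (cyl m A)).toReal = wgt σ m A := by
  have h := hb.2 (Finset.Icc (1:ℤ) (m:ℤ)) (confOf A)
  have hset : cyl m A = {η : Conf | ∀ x ∈ Finset.Icc (1:ℤ) (m:ℤ), η x = confOf A x} := rfl
  rw [hset, h]
  have hfac : ∀ x ∈ Finset.Icc (1:ℤ) (m:ℤ),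
      (if confOf A x = true then ENNReal.ofReal σ else ENNReal.ofReal (1 - σ))
        = ENNReal.ofReal (if x ∈ A then σ else 1 - σ) := by
    intro x _
    unfold confOf
    by_cases hx : x ∈ A
    · simp [hx]
    · simp [hx]
  rw [Finset.prod_congr rfl hfac, ← ENNReal.ofReal_prod_of_nonneg]
  · rw [ENNReal.toReal_ofReal]
    · rfl
    · apply Finset.prod_nonneg
      intro x _
      rcases hσ with ⟨h0, h1⟩
      split <;> linarith
  · intro x _
    rcases hσ with ⟨h0, h1⟩
    split <;> linarith

lemma integral_depends {ν : Measure Conf} [IsProbabilityMeasure ν] (m : ℕ)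
    (h : Conf → ℝ) (hdep : DependsOnCoords h (Finset.Icc (1:ℤ) (m:ℤ))) :
    ∫ η, h η ∂ν = ∑ A ∈ (Finset.Icc (1:ℤ) (m:ℤ)).powerset,
      (ν (cyl m A)).toReal * h (confOf A) := by
  classical
  have hfun : (fun η => h η) = fun η => ∑ A ∈ (Finset.Icc (1:ℤ) (m:ℤ)).powerset,
      (cyl m A).indicator (fun _ => h (confOf A)) η := by
    funext η
    exact expand m h hdep η
  rw [hfun, integral_finset_sum]
  · apply Finset.sum_congr rfl
    intro A _
    rw [integral_indicator_const _ (measurable_cyl m A)]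
    rw [smul_eq_mul]; rfl
  · intro A _
    exact (integrable_const _).indicator (measurable_cyl m A)


lemma wgt_sector {σ : ℝ} (m k : ℕ) (A : Finset ℤ) (hA : A ∈ secS m k) :
    wgt σ m A = σ^k * (1-σ)^(m-k) := by
  classical
  rw [secS, Finset.mem_powersetCard] at hA
  unfold wgt
  rw [← Finset.prod_filter_mul_prod_filter_not (Finset.Icc (1:ℤ) (m:ℤ)) (fun x => x ∈ A)]
  have h1 : (Finset.Icc (1:ℤ) (m:ℤ)).filter (fun x => x ∈ A) = A := by
    rw [Finset.filter_mem_eq_inter, Finset.inter_eq_right.2 hA.1]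
  have e1 : ∏ x ∈ (Finset.Icc (1:ℤ) (m:ℤ)).filter (fun x => x ∈ A),
      (if x ∈ A then σ else 1-σ) = σ^k := by
    rw [Finset.prod_congr rfl (fun x hx => if_pos (Finset.mem_filter.1 hx).2),
      Finset.prod_const, h1, hA.2]
  have e2 : ∏ x ∈ (Finset.Icc (1:ℤ) (m:ℤ)).filter (fun x => ¬ x ∈ A),
      (if x ∈ A then σ else 1-σ) = (1-σ)^(m-k) := by
    rw [Finset.prod_congr rfl (fun x hx => if_neg (Finset.mem_filter.1 hx).2),
      Finset.prod_const]
    congr 1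
    rw [Finset.filter_not, h1, Finset.card_sdiff_of_subset hA.1, card_Icc_int, hA.2]
  rw [e1, e2]

lemma sum_powerset_sectors (m : ℕ) (F : Finset ℤ → ℝ) :
    ∑ A ∈ (Finset.Icc (1:ℤ) (m:ℤ)).powerset, F A
      = ∑ k ∈ Finset.range (m+1), ∑ A ∈ secS m k, F A := by
  classical
  have hmaps : ∀ A ∈ (Finset.Icc (1:ℤ) (m:ℤ)).powerset, Finset.card A ∈ Finset.range (m+1) := by
    intro A hA
    rw [Finset.mem_powerset] at hA
    rw [Finset.mem_range]
    have := Finset.card_le_card hA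
    rw [card_Icc_int] at this
    omega
  rw [← Finset.sum_fiberwise_of_maps_to hmaps]
  apply Finset.sum_congr rfl
  intro k _
  rw [secS, Finset.powersetCard_eq_filter]



lemma bernstein_coeffs_zero (m : ℕ) (a : ℕ → ℝ)
    (h : ∀ σ ∈ Set.Icc (0:ℝ) 1,
      ∑ k ∈ Finset.range (m+1), a k * (σ^k * (1-σ)^(m-k)) = 0) :
    ∀ k ∈ Finset.range (m+1), a k = 0 := by
  classical
  set P : Polynomial ℝ := ∑ k ∈ Finset.range (m+1), Polynomial.C (a k) * Polynomial.X^k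
    with hP
  have heval : ∀ t : ℝ, 0 ≤ t → P.eval t = 0 := by
    intro t ht
    have hu : (0:ℝ) < 1 + t := by linarith
    have hσ : t/(1+t) ∈ Set.Icc (0:ℝ) 1 := by
      constructor
      · positivity
      · rw [div_le_one hu]; linarith
    have h0 := h _ hσ
    have hterm : ∀ k ∈ Finset.range (m+1),
        (a k * ((t/(1+t))^k * (1-t/(1+t))^(m-k))) * (1+t)^m = a k * t^k := by
      intro k hk
      rw [Finset.mem_range] at hk
      have h1 : 1 - t/(1+t) = 1/(1+t) := by field_simp; ring
      have hsplit : (1+t)^m = (1+t)^k * (1+t)^(m-k) := by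
        rw [← pow_add]; congr 1; omega
      rw [h1, hsplit, div_pow, div_pow, one_pow]
      have hk0 : ((1+t):ℝ)^k ≠ 0 := by positivity
      have hmk0 : ((1+t):ℝ)^(m-k) ≠ 0 := by positivity
      field_simp
    have h0' : ∑ k ∈ Finset.range (m+1), a k * t^k = 0 := by
      rw [← Finset.sum_congr rfl hterm, ← Finset.sum_mul, h0, zero_mul]
    have heq : P.eval t = ∑ k ∈ Finset.range (m+1), a k * t^k := by
      rw [hP, Polynomial.eval_finset_sum]
      apply Finset.sum_congr rfl
      intro k _
      simp
    rw [heq, h0']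
  have hroot : Set.Infinite {x : ℝ | P.IsRoot x} := by
    apply Set.Infinite.mono (s := Set.Ici (0:ℝ))
    · intro t ht
      exact heval t ht
    · exact Set.Ici_infinite 0
  have hP0 : P = 0 := Polynomial.eq_zero_of_infinite_isRoot P hroot
  intro k hk
  have hco := congrArg (fun p : Polynomial ℝ => p.coeff k) hP0
  rw [hP] at hco
  simp only [Polynomial.finset_sum_coeff, Polynomial.coeff_C_mul, Polynomial.coeff_X_pow,
    Polynomial.coeff_zero] at hco
  rw [Finset.sum_congr rfl (fun j _ => by rw [mul_ite, mul_one, mul_zero]),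
    Finset.sum_ite_eq (Finset.range (m+1)) k a, if_pos hk] at hco
  exact hco

end
end SG

/-- Spectral gap inequality: there is a universal constant `c₁ > 0` such that for every
density `ρ ∈ [0,1]`, every `ℓ ∈ ℕ` and every `f` depending only on `{η(1),…,η(ℓ)}` with
`∫ f dν_σ = 0` for all `σ ∈ [0,1]`,
`∫ f² dν_ρ ≤ c₁ ℓ² Σ_{x=1}^{ℓ−1} ∫ (∇_{x,x+1} f)² dν_ρ`. -/
theorem spectral_gap_inequality :
    ∃ c₁ : ℝ, 0 < c₁ ∧
      ∀ (ν : ℝ → Measure Conf),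
        (∀ σ ∈ Set.Icc (0 : ℝ) 1, IsBernoulliProduct σ (ν σ)) →
        ∀ ρ ∈ Set.Icc (0 : ℝ) 1, ∀ ℓ : ℕ, ∀ f : Conf → ℝ,
          DependsOnCoords f (Finset.Icc 1 (ℓ : ℤ)) →
          (∀ σ ∈ Set.Icc (0 : ℝ) 1, ∫ η, f η ∂(ν σ) = 0) →
          ∫ η, f η ^ 2 ∂(ν ρ)
            ≤ c₁ * (ℓ : ℝ) ^ 2 *
              ∑ x ∈ Finset.Ico (1 : ℤ) (ℓ : ℤ),
                ∫ η, (f (swapBond x η) - f η) ^ 2 ∂(ν ρ) := by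
  classical
  refine ⟨1, one_pos, ?_⟩
  intro ν hν ρ hρ ℓ f hdep hmean
  haveI : IsProbabilityMeasure (ν ρ) := (hν ρ hρ).1
  set g : Finset ℤ → ℝ := fun A => f (SG.confOf A) with hg
  -- canonical (fixed particle number) means vanish
  have ha : ∀ k ∈ Finset.range (ℓ+1), ∑ A ∈ SG.secS ℓ k, g A = 0 := by
    apply SG.bernstein_coeffs_zero ℓ
    intro σ hσ
    haveI : IsProbabilityMeasure (ν σ) := (hν σ hσ).1
    have h0 := hmean σ hσ
    rw [SG.integral_depends ℓ f hdep] at h0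
    have h1 : ∀ A ∈ (Finset.Icc (1:ℤ) (ℓ:ℤ)).powerset,
        ((ν σ) (SG.cyl ℓ A)).toReal * f (SG.confOf A) = SG.wgt σ ℓ A * g A := by
      intro A _
      rw [SG.cyl_measure (hν σ hσ) hσ ℓ A, hg]
    rw [Finset.sum_congr rfl h1, SG.sum_powerset_sectors] at h0
    rw [← h0]
    apply Finset.sum_congr rfl
    intro k _
    rw [Finset.sum_mul]
    apply Finset.sum_congr rfl
    intro A hA
    rw [SG.wgt_sector ℓ k A hA]
    ring
  set c : ℕ → ℝ := fun k => ρ^k * (1-ρ)^(ℓ-k) with hc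
  have hcnn : ∀ k, 0 ≤ c k := by
    intro k
    rw [hc]
    exact mul_nonneg (pow_nonneg hρ.1 _) (pow_nonneg (by linarith [hρ.2]) _)
  -- expansion of integrals of local functions
  have hexp : ∀ h : Conf → ℝ, DependsOnCoords h (Finset.Icc (1:ℤ) (ℓ:ℤ)) →
      ∫ η, h η ∂(ν ρ) = ∑ k ∈ Finset.range (ℓ+1),
        c k * ∑ A ∈ SG.secS ℓ k, h (SG.confOf A) := by
    intro h hd
    rw [SG.integral_depends ℓ h hd]
    have h1 : ∀ A ∈ (Finset.Icc (1:ℤ) (ℓ:ℤ)).powerset,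
        ((ν ρ) (SG.cyl ℓ A)).toReal * h (SG.confOf A) = SG.wgt ρ ℓ A * h (SG.confOf A) := by
      intro A _
      rw [SG.cyl_measure (hν ρ hρ) hρ ℓ A]
    rw [Finset.sum_congr rfl h1, SG.sum_powerset_sectors]
    apply Finset.sum_congr rfl
    intro k _
    rw [Finset.mul_sum]
    apply Finset.sum_congr rfl
    intro A hA
    rw [SG.wgt_sector ℓ k A hA, hc]
  have hdep2 : DependsOnCoords (fun η => f η ^ 2) (Finset.Icc (1:ℤ) (ℓ:ℤ)) := by
    intro η ξ hh
    have := hdep η ξ hh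
    simp only [this]
  have hint2 : ∫ η, f η ^ 2 ∂(ν ρ) = ∑ k ∈ Finset.range (ℓ+1),
      c k * ∑ A ∈ SG.secS ℓ k, (g A)^2 := hexp _ hdep2
  -- Dirichlet terms
  have hdepx : ∀ x ∈ Finset.Ico (1:ℤ) (ℓ:ℤ),
      DependsOnCoords (fun η => (f (swapBond x η) - f η)^2) (Finset.Icc (1:ℤ) (ℓ:ℤ)) := by
    intro x hx η ξ hh
    rw [Finset.mem_Ico] at hx
    have h1 : f (swapBond x η) = f (swapBond x ξ) := by
      apply hdep
      intro z hz
      rw [SG.swapBond_eq, SG.swapBond_eq]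
      apply hh
      rw [Finset.mem_Icc] at hz ⊢
      rcases eq_or_ne z x with rfl | hne1
      · rw [Equiv.swap_apply_left]; omega
      rcases eq_or_ne z (x+1) with rfl | hne2
      · rw [Equiv.swap_apply_right]; omega
      · rw [Equiv.swap_apply_of_ne_of_ne hne1 hne2]; omega
    have h2 := hdep η ξ hh
    simp only [h1, h2]
  have hintD : ∀ x ∈ Finset.Ico (1:ℤ) (ℓ:ℤ),
      ∫ η, (f (swapBond x η) - f η)^2 ∂(ν ρ)
        = ∑ k ∈ Finset.range (ℓ+1), c k * ∑ A ∈ SG.secS ℓ k,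
            (g (SG.tau x A) - g A)^2 := by
    intro x hx
    have h := hexp _ (hdepx x hx)
    rw [h]
    apply Finset.sum_congr rfl
    intro k _
    congr 1
    apply Finset.sum_congr rfl
    intro A _
    rw [hg]
    simp only [SG.swapBond_confOf]
  have hsumD : ∑ x ∈ Finset.Ico (1:ℤ) (ℓ:ℤ), ∫ η, (f (swapBond x η) - f η)^2 ∂(ν ρ)
      = ∑ k ∈ Finset.range (ℓ+1), c k * SG.Dform ℓ k g := by
    rw [Finset.sum_congr rfl hintD, Finset.sum_comm]
    apply Finset.sum_congr rfl
    intro k _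
    rw [← Finset.mul_sum]
    rfl
  -- per-sector spectral gap from the core estimate
  have hsec : ∀ k ∈ Finset.range (ℓ+1),
      ∑ A ∈ SG.secS ℓ k, (g A)^2 ≤ ((ℓ:ℝ)^2/12) * SG.Dform ℓ k g := by
    intro k hk
    have h := SG.core ℓ k g
    rw [SG.card_secS, ha k hk] at h
    have hN : (0:ℝ) < (Nat.choose ℓ k : ℝ) := by
      have : k ≤ ℓ := by rw [Finset.mem_range] at hk; omega
      exact_mod_cast Nat.choose_pos this
    have h2 : (Nat.choose ℓ k : ℝ) * ∑ A ∈ SG.secS ℓ k, (g A)^2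
        ≤ (Nat.choose ℓ k : ℝ) * (((ℓ:ℝ)^2/12) * SG.Dform ℓ k g) := by
      nlinarith [h]
    exact le_of_mul_le_mul_left h2 hN
  have hDnn : ∀ k, 0 ≤ SG.Dform ℓ k g := fun k => SG.Dform_nonneg ℓ k g
  have hR0 : 0 ≤ ∑ k ∈ Finset.range (ℓ+1), c k * SG.Dform ℓ k g :=
    Finset.sum_nonneg (fun k _ => mul_nonneg (hcnn k) (hDnn k))
  have hfin : ∫ η, f η ^ 2 ∂(ν ρ)
      ≤ ((ℓ:ℝ)^2/12) * ∑ k ∈ Finset.range (ℓ+1), c k * SG.Dform ℓ k g := by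
    rw [hint2, Finset.mul_sum]
    apply Finset.sum_le_sum
    intro k hk
    calc c k * ∑ A ∈ SG.secS ℓ k, (g A)^2
        ≤ c k * (((ℓ:ℝ)^2/12) * SG.Dform ℓ k g) :=
          mul_le_mul_of_nonneg_left (hsec k hk) (hcnn k)
      _ = ((ℓ:ℝ)^2/12) * (c k * SG.Dform ℓ k g) := by ring
  rw [hsumD]
  calc ∫ η, f η ^ 2 ∂(ν ρ)
      ≤ ((ℓ:ℝ)^2/12) * ∑ k ∈ Finset.range (ℓ+1), c k * SG.Dform ℓ k g := hfin
    _ ≤ 1 * (ℓ:ℝ)^2 * ∑ k ∈ Finset.range (ℓ+1), c k * SG.Dform ℓ k g := by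
        nlinarith [hR0, sq_nonneg ((ℓ:ℝ))]
end

section
/- For every Schwartz function u ∈ 𝒮(ℝ), the discrete energies converge to the continuum energy: lim_{n→∞} (1/n) Σ_{x∈ℤ} ( n·(u((x+1)/n) − u(x/n)) )² = ∫_ℝ (u'(x))² dx. -/
open MeasureTheory Filter

namespace DEAux

variable (u : SchwartzMap ℝ ℝ)

noncomputable def h (n : ℕ) (t : ℝ) : ℝ :=
  (n : ℝ) * (u (((⌊(n : ℝ) * t⌋ : ℝ) + 1) / n) - u ((⌊(n : ℝ) * t⌋ : ℝ) / n))

lemma measurable_h (n : ℕ) : Measurable (h u n) := by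
  apply measurable_const.mul
  have hf : Measurable fun t : ℝ => ((⌊(n : ℝ) * t⌋ : ℤ) : ℝ) :=
    measurable_from_top.comp ((measurable_const.mul measurable_id).floor)
  exact ((u.continuous.measurable.comp ((hf.add measurable_const).div_const _)).sub
    (u.continuous.measurable.comp (hf.div_const _)))

lemma exists_mvt {n : ℕ} (hn : 1 ≤ n) (t : ℝ) :
    ∃ c : ℝ, h u n t = deriv u c ∧ |c - t| < 1 / n := by
  have hn0 : (0 : ℝ) < n := by exact_mod_cast hn
  set x : ℤ := ⌊(n : ℝ) * t⌋ with hx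
  set a : ℝ := (x : ℝ) / n with ha
  set b : ℝ := ((x : ℝ) + 1) / n with hb
  have hab : a < b := by
    rw [ha, hb, div_lt_div_iff_of_pos_right hn0]; linarith
  have hba : b - a = 1 / n := by rw [ha, hb]; field_simp; ring
  have hta : a ≤ t := by
    rw [ha, div_le_iff₀ hn0]
    have := Int.floor_le ((n : ℝ) * t)
    rw [← hx] at this; linarith [this]
  have htb : t < b := by
    rw [hb, lt_div_iff₀ hn0]
    have := Int.lt_floor_add_one ((n : ℝ) * t)
    rw [← hx] at this; linarith [this]
  obtain ⟨c, hc, hcd⟩ := exists_deriv_eq_slope (⇑u) hab u.continuous.continuousOn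
    (fun y _ => u.differentiableAt.differentiableWithinAt)
  refine ⟨c, ?_, ?_⟩
  · rw [hcd, hba, h, ← hx, ← ha, ← hb]
    field_simp
  · rw [abs_sub_lt_iff]
    constructor <;> [linarith [hc.2, hba, hta]; linarith [hc.1, hba, htb]]

lemma decay : ∃ C : ℝ, 0 ≤ C ∧ ∀ x : ℝ, |deriv u x| ≤ C / (1 + |x|) ^ 2 := by
  set v := SchwartzMap.derivCLM ℝ ℝ u with hv
  refine ⟨2 ^ 2 * (Finset.Iic ((2 : ℕ), (0 : ℕ))).sup
      (fun m => SchwartzMap.seminorm ℝ m.1 m.2) v, by positivity, fun x => ?_⟩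
  have h1 := SchwartzMap.one_add_le_sup_seminorm_apply (𝕜 := ℝ) (m := ((2 : ℕ), (0 : ℕ)))
    le_rfl le_rfl v x
  rw [norm_iteratedFDeriv_zero] at h1
  have h2 : ‖v x‖ = |deriv u x| := by
    rw [hv, SchwartzMap.derivCLM_apply, Real.norm_eq_abs]
  have hpos : (0 : ℝ) < (1 + |x|) ^ 2 := by positivity
  rw [le_div_iff₀ hpos]
  rw [h2, Real.norm_eq_abs] at h1
  calc |deriv u x| * (1 + |x|) ^ 2 = (1 + |x|) ^ 2 * |deriv u x| := by ring
    _ ≤ _ := h1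

lemma bound_sq {C : ℝ} (hC : 0 ≤ C) (hdec : ∀ x : ℝ, |deriv u x| ≤ C / (1 + |x|) ^ 2)
    (n : ℕ) (t : ℝ) : (h u n t) ^ 2 ≤ 16 * C ^ 2 * (1 + t ^ 2)⁻¹ := by
  have hpos : (0 : ℝ) < 1 + t ^ 2 := by positivity
  rcases Nat.eq_zero_or_pos n with hn | hn
  · subst hn
    simp [h]
    positivity
  · obtain ⟨c, hc1, hc2⟩ := exists_mvt u hn t
    have h1n : (1 : ℝ) / n ≤ 1 := by
      rw [div_le_one (by exact_mod_cast hn)]; exact_mod_cast hn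
    have hct : |c - t| ≤ 1 := le_of_lt (lt_of_lt_of_le hc2 h1n)
    have hkey : |h u n t| ≤ 4 * C / (1 + |t|) ^ 2 := by
      rw [hc1]
      refine le_trans (hdec c) ?_
      rw [div_le_div_iff₀ (by positivity) (by positivity)]
      have h1 : 1 + |t| ≤ 2 * (1 + |c|) := by
        have := abs_sub_abs_le_abs_sub t c
        rw [abs_sub_comm] at this
        linarith [hct, abs_nonneg c]
      have h1sq : (1 + |t|) * (1 + |t|) ≤ (2 * (1 + |c|)) * (2 * (1 + |c|)) :=
        mul_le_mul h1 h1 (by positivity) (by positivity)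
      nlinarith [hC, h1sq]
    have h2 : (h u n t) ^ 2 ≤ (4 * C / (1 + |t|) ^ 2) ^ 2 := by
      rw [← sq_abs (h u n t)]
      exact pow_le_pow_left₀ (abs_nonneg _) hkey 2
    refine le_trans h2 ?_
    rw [div_pow, div_le_iff₀ (by positivity), ← sq_abs t]
    have h3 : (1 : ℝ) + |t| ^ 2 ≤ ((1 + |t|) ^ 2) ^ 2 := by
      nlinarith [abs_nonneg t]
    have h4 : (4 * C) ^ 2 = 16 * C ^ 2 := by ring
    calc (4 * C) ^ 2 = 16 * C ^ 2 * (1 + |t| ^ 2)⁻¹ * (1 + |t| ^ 2) := by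
          field_simp
          ring
      _ ≤ 16 * C ^ 2 * (1 + |t| ^ 2)⁻¹ * ((1 + |t|) ^ 2) ^ 2 := by
          have : (0:ℝ) ≤ 16 * C ^ 2 * (1 + |t| ^ 2)⁻¹ := by positivity
          exact mul_le_mul_of_nonneg_left h3 this

lemma tendsto_h (t : ℝ) : Tendsto (fun n => h u n t) atTop (nhds (deriv u t)) := by
  classical
  set c : ℕ → ℝ := fun n => if hn : 1 ≤ n then (exists_mvt u hn t).choose else t with hcdef
  have hspec : ∀ n (hn : 1 ≤ n), h u n t = deriv u (c n) ∧ |c n - t| < 1 / n := by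
    intro n hn
    simp only [hcdef, dif_pos hn]
    exact (exists_mvt u hn t).choose_spec
  have hct : Tendsto c atTop (nhds t) := by
    have hsub : Tendsto (fun n => c n - t) atTop (nhds 0) := by
      apply squeeze_zero_norm' (a := fun n : ℕ => 1 / (n : ℝ))
      · filter_upwards [eventually_ge_atTop 1] with n hn
        exact le_of_lt (hspec n hn).2
      · exact tendsto_one_div_atTop_nhds_zero_nat
    have := hsub.add (tendsto_const_nhds (x := t))
    simpa using this
  have hcont : Continuous (deriv (⇑u)) := by
    have : (deriv (⇑u)) = ⇑(SchwartzMap.derivCLM ℝ ℝ u) := by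
      funext x; rw [SchwartzMap.derivCLM_apply]
    rw [this]
    exact (SchwartzMap.derivCLM ℝ ℝ u).continuous
  have h2 : Tendsto (fun n => deriv (⇑u) (c n)) atTop (nhds (deriv u t)) :=
    (hcont.tendsto t).comp hct
  apply h2.congr'
  filter_upwards [eventually_ge_atTop 1] with n hn
  exact ((hspec n hn).1).symm

lemma mem_Ico_iff {n : ℕ} (hn : 1 ≤ n) (x : ℤ) (t : ℝ) :
    t ∈ Set.Ico ((x : ℝ) / n) (((x : ℝ) + 1) / n) ↔ ⌊(n : ℝ) * t⌋ = x := by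
  have hn0 : (0 : ℝ) < n := by exact_mod_cast hn
  rw [Int.floor_eq_iff, Set.mem_Ico, div_le_iff₀ hn0, lt_div_iff₀ hn0]
  constructor <;> rintro ⟨h1, h2⟩ <;> constructor <;> linarith

lemma energy_eq {n : ℕ} (hn : 1 ≤ n)
    (hint : Integrable (fun t => (h u n t) ^ 2)) :
    (∫ t : ℝ, (h u n t) ^ 2)
      = (1 / (n : ℝ)) *
          ∑' x : ℤ, ((n : ℝ) * (u (((x : ℝ) + 1) / n) - u ((x : ℝ) / n))) ^ 2 := by
  have hn0 : (0 : ℝ) < n := by exact_mod_cast hn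
  set s : ℤ → Set ℝ := fun x => Set.Ico ((x : ℝ) / n) (((x : ℝ) + 1) / n) with hs
  have hms : ∀ x, MeasurableSet (s x) := fun x => measurableSet_Ico
  have hdisj : Pairwise (Function.onFun Disjoint s) := by
    intro x y hxy
    simp only [Function.onFun, Set.disjoint_left]
    intro t htx hty
    exact hxy (((mem_Ico_iff hn x t).1 htx).symm.trans ((mem_Ico_iff hn y t).1 hty))
  have hunion : (⋃ x : ℤ, s x) = Set.univ := by
    ext t
    simp only [Set.mem_iUnion, Set.mem_univ, iff_true]
    exact ⟨⌊(n : ℝ) * t⌋, (mem_Ico_iff hn _ t).2 rfl⟩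
  have hI : IntegrableOn (fun t => (h u n t) ^ 2) (⋃ x : ℤ, s x) :=
    hint.integrableOn
  have hiu := integral_iUnion hms hdisj hI
  rw [hunion, setIntegral_univ] at hiu
  rw [hiu]
  have hterm : ∀ x : ℤ, (∫ t in s x, (h u n t) ^ 2)
      = (1 / (n : ℝ)) * ((n : ℝ) * (u (((x : ℝ) + 1) / n) - u ((x : ℝ) / n))) ^ 2 := by
    intro x
    have hconst : Set.EqOn (fun t => (h u n t) ^ 2)
        (fun _ => ((n : ℝ) * (u (((x : ℝ) + 1) / n) - u ((x : ℝ) / n))) ^ 2) (s x) := by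
      intro t ht
      have hx := (mem_Ico_iff hn x t).1 ht
      simp only [h, hx]
    rw [setIntegral_congr_fun (hms x) hconst, setIntegral_const]
    have hba : ((x : ℝ) + 1) / n - (x : ℝ) / n = 1 / n := by field_simp; ring
    rw [hs]
    simp only [Real.volume_real_Ico, hba]
    rw [max_eq_left (by positivity), smul_eq_mul]
  rw [tsum_congr hterm, tsum_mul_left]

end DEAux

open DEAux in
/-- For every Schwartz function `u`, the discrete energies converge to the continuum energy:
`lim_{n→∞} (1/n) Σ_{x∈ℤ} (n·(u((x+1)/n) − u(x/n)))² = ∫_ℝ (u'(x))² dx`. -/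
theorem discrete_energy_tendsto_energy (u : SchwartzMap ℝ ℝ) :
    Tendsto
      (fun n : ℕ =>
        (1 / (n : ℝ)) *
          ∑' x : ℤ, ((n : ℝ) * (u (((x : ℝ) + 1) / n) - u ((x : ℝ) / n))) ^ 2)
      atTop (nhds (∫ x : ℝ, (deriv (⇑u) x) ^ 2)) := by
  obtain ⟨C, hC, hdec⟩ := DEAux.decay u
  set bound : ℝ → ℝ := fun t => 16 * C ^ 2 * (1 + t ^ 2)⁻¹ with hbd
  have hbound_int : Integrable bound := integrable_inv_one_add_sq.const_mul _
  have hmeas : ∀ n : ℕ, AEStronglyMeasurable (fun t => (DEAux.h u n t) ^ 2) volume :=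
    fun n => ((DEAux.measurable_h u n).pow_const 2).aestronglyMeasurable
  have h_bound : ∀ n : ℕ, ∀ᵐ t : ℝ, ‖(DEAux.h u n t) ^ 2‖ ≤ bound t := by
    intro n
    filter_upwards with t
    rw [Real.norm_eq_abs, abs_of_nonneg (sq_nonneg _)]
    exact DEAux.bound_sq u hC hdec n t
  have h_lim : ∀ᵐ t : ℝ, Tendsto (fun n : ℕ => (DEAux.h u n t) ^ 2) atTop
      (nhds ((deriv (⇑u) t) ^ 2)) := by
    filter_upwards with t
    exact (DEAux.tendsto_h u t).pow 2
  have key := tendsto_integral_of_dominated_convergence bound hmeas hbound_int h_bound h_lim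
  apply key.congr'
  filter_upwards [eventually_ge_atTop 1] with n hn
  have hint : Integrable (fun t => (DEAux.h u n t) ^ 2) :=
    hbound_int.mono' (hmeas n) (h_bound n)
  exact DEAux.energy_eq u hn hint
end

section
/- For every Schwartz function u ∈ 𝒮(ℝ), lim_{n→∞} (1/n) Σ_{x∈ℤ} ( n²·(u((x+1)/n) + u((x−1)/n) − 2u(x/n)) )² = ∫_ℝ (u''(x))² dx. -/
open MeasureTheory Filter SchwartzMap Set

namespace DLaux
variable (u : SchwartzMap ℝ ℝ)

noncomputable def v : SchwartzMap ℝ ℝ := derivCLM ℝ ℝ (derivCLM ℝ ℝ u)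

lemma hderiv_u (y : ℝ) : HasDerivAt (⇑u) (derivCLM ℝ ℝ u y) y := by
  rw [derivCLM_apply]; exact (u.differentiable.differentiableAt).hasDerivAt

lemma hderiv_u1 (y : ℝ) : HasDerivAt (⇑(derivCLM ℝ ℝ u)) (v u y) y := by
  rw [v, derivCLM_apply]
  exact ((derivCLM ℝ ℝ u).differentiable.differentiableAt).hasDerivAt

lemma key1 (a h : ℝ) :
    u (a + h) + u (a - h) - 2 * u a
      = ∫ s in (0:ℝ)..h, (derivCLM ℝ ℝ u (a + s) - derivCLM ℝ ℝ u (a - s)) := by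
  have hd : ∀ s ∈ uIcc (0:ℝ) h, HasDerivAt (fun s => u (a + s) + u (a - s))
      (derivCLM ℝ ℝ u (a + s) - derivCLM ℝ ℝ u (a - s)) s := by
    intro s _
    have h1 : HasDerivAt (fun s : ℝ => u (a + s)) (derivCLM ℝ ℝ u (a + s) * 1) s :=
      (hderiv_u u (a + s)).comp s ((hasDerivAt_id s).const_add a)
    have h2 : HasDerivAt (fun s : ℝ => u (a - s)) (derivCLM ℝ ℝ u (a - s) * (-1)) s :=
      (hderiv_u u (a - s)).comp s ((hasDerivAt_id s).const_sub a)
    have := h1.add h2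
    simpa [mul_neg_one, ← sub_eq_add_neg, Pi.add_def] using this
  have hi : IntervalIntegrable
      (fun s => derivCLM ℝ ℝ u (a + s) - derivCLM ℝ ℝ u (a - s)) volume 0 h :=
    (((derivCLM ℝ ℝ u).continuous.comp (continuous_const.add continuous_id)).sub
      ((derivCLM ℝ ℝ u).continuous.comp (continuous_const.sub continuous_id))).intervalIntegrable _ _
  rw [intervalIntegral.integral_eq_sub_of_hasDerivAt hd hi]
  simp; ring

lemma key2 (a s : ℝ) :
    derivCLM ℝ ℝ u (a + s) - derivCLM ℝ ℝ u (a - s) = ∫ y in (a - s)..(a + s), v u y := by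
  rw [intervalIntegral.integral_eq_sub_of_hasDerivAt
      (fun y _ => hderiv_u1 u y) ((v u).continuous.intervalIntegrable _ _)]


lemma est1 {C : ℝ} (hC : ∀ y z, ‖v u y - v u z‖ ≤ C * ‖y - z‖) (a : ℝ) {h : ℝ}
    (hh : 0 < h) :
    ‖(u (a + h) + u (a - h) - 2 * u a) - h ^ 2 * v u a‖ ≤ 2 * C * h ^ 3 := by
  have hC0 : 0 ≤ C := by
    have := hC (a + 1) a
    simp at this
    exact le_trans (abs_nonneg _) this
  have hconst : h ^ 2 * v u a = ∫ s in (0:ℝ)..h, 2 * s * v u a := by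
    rw [intervalIntegral.integral_mul_const, intervalIntegral.integral_const_mul,
      integral_id]
    ring
  have hint1 : IntervalIntegrable
      (fun s => derivCLM ℝ ℝ u (a + s) - derivCLM ℝ ℝ u (a - s)) volume 0 h :=
    (((derivCLM ℝ ℝ u).continuous.comp (continuous_const.add continuous_id)).sub
      ((derivCLM ℝ ℝ u).continuous.comp (continuous_const.sub continuous_id))).intervalIntegrable _ _
  have hint2 : IntervalIntegrable (fun s : ℝ => 2 * s * v u a) volume 0 h :=
    (by continuity : Continuous fun s : ℝ => 2 * s * v u a).intervalIntegrable _ _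
  rw [key1, hconst, ← intervalIntegral.integral_sub hint1 hint2]
  have hb : ∀ s ∈ Set.uIoc (0:ℝ) h,
      ‖derivCLM ℝ ℝ u (a + s) - derivCLM ℝ ℝ u (a - s) - 2 * s * v u a‖ ≤ 2 * C * h ^ 2 := by
    intro s hs
    rw [uIoc_of_le hh.le] at hs
    obtain ⟨hs0, hsh⟩ := hs
    have hsplit : derivCLM ℝ ℝ u (a + s) - derivCLM ℝ ℝ u (a - s) - 2 * s * v u a
        = ∫ y in (a - s)..(a + s), (v u y - v u a) := by
      rw [intervalIntegral.integral_sub ((v u).continuous.intervalIntegrable _ _)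
        (intervalIntegrable_const), intervalIntegral.integral_const, key2 u a s, smul_eq_mul]
      ring
    rw [hsplit]
    have hbin : ∀ y ∈ Set.uIoc (a - s) (a + s), ‖v u y - v u a‖ ≤ C * s := by
      intro y hy
      rw [uIoc_of_le (by linarith)] at hy
      obtain ⟨hy1, hy2⟩ := hy
      calc ‖v u y - v u a‖ ≤ C * ‖y - a‖ := hC y a
        _ ≤ C * s := by
            apply mul_le_mul_of_nonneg_left _ hC0
            rw [Real.norm_eq_abs, abs_le]
            constructor <;> linarith
    calc ‖∫ y in (a - s)..(a + s), (v u y - v u a)‖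
        ≤ C * s * |(a + s) - (a - s)| :=
          intervalIntegral.norm_integral_le_of_norm_le_const hbin
      _ ≤ 2 * C * h ^ 2 := by
          rw [abs_of_nonneg (by linarith)]
          nlinarith [mul_nonneg (mul_nonneg hC0 (sub_nonneg.2 hsh)) (by linarith : (0:ℝ) ≤ h + s)]
  calc ‖∫ s in (0:ℝ)..h, (derivCLM ℝ ℝ u (a + s) - derivCLM ℝ ℝ u (a - s) - 2 * s * v u a)‖
      ≤ 2 * C * h ^ 2 * |h - 0| := intervalIntegral.norm_integral_le_of_norm_le_const hb
    _ = 2 * C * h ^ 3 := by rw [abs_of_nonneg (by linarith)]; ring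

lemma est2 {M : ℝ} (a : ℝ) {h : ℝ} (hh : 0 < h)
    (hM : ∀ y ∈ Icc (a - h) (a + h), ‖v u y‖ ≤ M) :
    ‖u (a + h) + u (a - h) - 2 * u a‖ ≤ 2 * M * h ^ 2 := by
  have hM0 : 0 ≤ M := le_trans (norm_nonneg _) (hM a ⟨by linarith, by linarith⟩)
  rw [key1]
  have hb : ∀ s ∈ Set.uIoc (0:ℝ) h,
      ‖derivCLM ℝ ℝ u (a + s) - derivCLM ℝ ℝ u (a - s)‖ ≤ 2 * M * h := by
    intro s hs
    rw [uIoc_of_le hh.le] at hs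
    obtain ⟨hs0, hsh⟩ := hs
    rw [key2]
    have hbin : ∀ y ∈ Set.uIoc (a - s) (a + s), ‖v u y‖ ≤ M := by
      intro y hy
      rw [uIoc_of_le (by linarith)] at hy
      exact hM y ⟨by linarith [hy.1], by linarith [hy.2]⟩
    calc ‖∫ y in (a - s)..(a + s), v u y‖
        ≤ M * |(a + s) - (a - s)| :=
          intervalIntegral.norm_integral_le_of_norm_le_const hbin
      _ ≤ 2 * M * h := by rw [abs_of_nonneg (by linarith)]; nlinarith
  calc ‖∫ s in (0:ℝ)..h, (derivCLM ℝ ℝ u (a + s) - derivCLM ℝ ℝ u (a - s))‖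
      ≤ 2 * M * h * |h - 0| := intervalIntegral.norm_integral_le_of_norm_le_const hb
    _ = 2 * M * h ^ 2 := by rw [abs_of_nonneg (by linarith)]; ring


noncomputable def w : SchwartzMap ℝ ℝ := derivCLM ℝ ℝ (v u)

lemma hderiv_v (y : ℝ) : HasDerivAt (⇑(v u)) (w u y) y := by
  rw [w, derivCLM_apply]
  exact ((v u).differentiable.differentiableAt).hasDerivAt

lemma exists_bound (f : SchwartzMap ℝ ℝ) : ∃ C, 0 < C ∧ ∀ x, ‖f x‖ ≤ C := by
  obtain ⟨C, hC, h⟩ := f.decay 0 0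
  exact ⟨C, hC, fun x => by simpa [norm_iteratedFDeriv_zero] using h x⟩

lemma v_lip : ∃ C, 0 < C ∧ ∀ y z, ‖v u y - v u z‖ ≤ C * ‖y - z‖ := by
  obtain ⟨C, hCpos, hC⟩ := exists_bound (w u)
  refine ⟨C, hCpos, fun y z => ?_⟩
  refine Convex.norm_image_sub_le_of_norm_deriv_le
    (fun x _ => (v u).differentiable.differentiableAt)
    (fun x _ => ?_) convex_univ (mem_univ z) (mem_univ y)
  rw [(hderiv_v u x).deriv]
  exact hC x

lemma v_decay : ∃ D, 0 < D ∧ ∀ x : ℝ, ‖v u x‖ ≤ D / (1 + x ^ 2) := by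
  obtain ⟨C0, hC0, h0⟩ := exists_bound (v u)
  obtain ⟨C2, hC2, h2⟩ := (v u).decay 2 0
  refine ⟨C0 + C2, by positivity, fun x => ?_⟩
  rw [le_div_iff₀ (by positivity)]
  have h2x : x ^ 2 * ‖v u x‖ ≤ C2 := by
    simpa [norm_iteratedFDeriv_zero, Real.norm_eq_abs, sq_abs] using h2 x
  nlinarith [h0 x, norm_nonneg (v u x)]

noncomputable def aTerm (n : ℕ) (x : ℤ) : ℝ :=
  (n : ℝ) ^ 2 * (u (((x : ℝ) + 1) / n) + u (((x : ℝ) - 1) / n) - 2 * u ((x : ℝ) / n))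

lemma aTerm_eq (n : ℕ) (x : ℤ) :
    aTerm u n x
      = (n : ℝ) ^ 2 *
        (u ((x : ℝ) / n + 1 / n) + u ((x : ℝ) / n - 1 / n) - 2 * u ((x : ℝ) / n)) := by
  rw [aTerm, ← add_div, div_sub_div_same]

lemma aTerm_est1 {C : ℝ} (hC : ∀ y z, ‖v u y - v u z‖ ≤ C * ‖y - z‖)
    {n : ℕ} (hn : 1 ≤ n) (x : ℤ) :
    ‖aTerm u n x - v u ((x : ℝ) / n)‖ ≤ 2 * C / n := by
  have hn0 : (0 : ℝ) < n := by exact_mod_cast hn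
  have hh : (0 : ℝ) < 1 / n := by positivity
  have h1 : (n : ℝ) ^ 2 * (1 / (n:ℝ)) ^ 2 = 1 := by field_simp
  set a : ℝ := (x : ℝ) / n with ha
  have key : aTerm u n x - v u a
      = (n : ℝ) ^ 2 * ((u (a + 1 / n) + u (a - 1 / n) - 2 * u a) - (1 / n) ^ 2 * v u a) := by
    rw [aTerm_eq, ← ha]
    linear_combination (v u a) * h1
  have hest := est1 u hC a hh
  rw [key, norm_mul, Real.norm_eq_abs, abs_of_nonneg (by positivity : (0:ℝ) ≤ (n:ℝ)^2)]
  calc (n : ℝ) ^ 2 * ‖(u (a + 1 / n) + u (a - 1 / n) - 2 * u a) - (1 / n) ^ 2 * v u a‖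
      ≤ (n : ℝ) ^ 2 * (2 * C * (1 / n) ^ 3) :=
        mul_le_mul_of_nonneg_left hest (by positivity)
    _ = 2 * C / n := by field_simp

lemma aTerm_est2 {M : ℝ} {n : ℕ} (hn : 1 ≤ n) (x : ℤ)
    (hM : ∀ y ∈ Icc ((x : ℝ) / n - 1 / n) ((x : ℝ) / n + 1 / n), ‖v u y‖ ≤ M) :
    ‖aTerm u n x‖ ≤ 2 * M := by
  have hn0 : (0 : ℝ) < n := by exact_mod_cast hn
  have hh : (0 : ℝ) < 1 / n := by positivity
  set a : ℝ := (x : ℝ) / n with ha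
  have hest := est2 u a hh hM
  rw [aTerm_eq, ← ha, norm_mul, Real.norm_eq_abs, abs_of_nonneg (by positivity : (0:ℝ) ≤ (n:ℝ)^2)]
  calc (n : ℝ) ^ 2 * ‖u (a + 1 / n) + u (a - 1 / n) - 2 * u a‖
      ≤ (n : ℝ) ^ 2 * (2 * M * (1 / n) ^ 2) := mul_le_mul_of_nonneg_left hest (by positivity)
    _ = 2 * M := by field_simp


lemma floor_eq {n : ℕ} (hn : 1 ≤ n) {x : ℤ} {t : ℝ}
    (ht : t ∈ Ico ((x : ℝ) / n) (((x : ℝ) + 1) / n)) : ⌊(n : ℝ) * t⌋ = x := by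
  have hn0 : (0 : ℝ) < n := by exact_mod_cast hn
  rw [Int.floor_eq_iff]
  constructor
  · have := (div_le_iff₀ hn0).1 ht.1
    linarith [this]
  · have := (lt_div_iff₀ hn0).1 ht.2
    push_cast
    linarith [this]

lemma step_integral {n : ℕ} (hn : 1 ≤ n)
    (hint : Integrable (fun t : ℝ => (aTerm u n ⌊(n : ℝ) * t⌋) ^ 2)) :
    ∫ t : ℝ, (aTerm u n ⌊(n : ℝ) * t⌋) ^ 2
      = ∑' x : ℤ, (1 / (n : ℝ)) * (aTerm u n x) ^ 2 := by
  have hn0 : (0 : ℝ) < n := by exact_mod_cast hn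
  set S : ℤ → Set ℝ := fun x => Ico ((x : ℝ) / n) (((x : ℝ) + 1) / n) with hS
  have hUnion : (⋃ x, S x) = univ := by
    refine eq_univ_of_forall fun t => mem_iUnion.2 ⟨⌊(n : ℝ) * t⌋, ?_, ?_⟩
    · rw [div_le_iff₀ hn0]
      have := Int.floor_le ((n : ℝ) * t)
      linarith
    · rw [lt_div_iff₀ hn0]
      have := Int.lt_floor_add_one ((n : ℝ) * t)
      linarith
  have hdisj : Pairwise (Function.onFun Disjoint S) := by
    intro x y hxy
    rw [Function.onFun, hS]
    dsimp only
    rw [Set.Ico_disjoint_Ico]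
    rcases hxy.lt_or_gt with h | h
    · have hxy1 : ((x : ℝ) + 1) ≤ (y : ℝ) := by exact_mod_cast h
      refine le_trans (min_le_left _ _) (le_trans ?_ (le_max_right _ _))
      exact div_le_div_of_nonneg_right hxy1 hn0.le |>.trans_eq rfl
    · have hxy1 : ((y : ℝ) + 1) ≤ (x : ℝ) := by exact_mod_cast h
      refine le_trans (min_le_right _ _) (le_trans ?_ (le_max_left _ _))
      exact div_le_div_of_nonneg_right hxy1 hn0.le |>.trans_eq rfl
  have step : ∀ x : ℤ, ∫ t in S x, (aTerm u n ⌊(n : ℝ) * t⌋) ^ 2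
      = (1 / (n : ℝ)) * (aTerm u n x) ^ 2 := by
    intro x
    rw [setIntegral_congr_fun measurableSet_Ico
      (g := fun _ => (aTerm u n x) ^ 2) (fun t ht => by rw [floor_eq hn ht]),
      setIntegral_const]
    rw [Real.volume_real_Ico, smul_eq_mul]
    congr 1
    rw [show ((x : ℝ) + 1) / n - (x : ℝ) / n = 1 / n by rw [div_sub_div_same]; ring_nf,
      max_eq_left (by positivity)]
  calc ∫ t : ℝ, (aTerm u n ⌊(n : ℝ) * t⌋) ^ 2
      = ∫ t in ⋃ x, S x, (aTerm u n ⌊(n : ℝ) * t⌋) ^ 2 := by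
        rw [hUnion, setIntegral_univ]
    _ = ∑' x : ℤ, ∫ t in S x, (aTerm u n ⌊(n : ℝ) * t⌋) ^ 2 :=
        integral_iUnion (fun _ => measurableSet_Ico) hdisj
          (by rw [hUnion]; exact hint.integrableOn)
    _ = ∑' x : ℤ, (1 / (n : ℝ)) * (aTerm u n x) ^ 2 := tsum_congr step


lemma meas (n : ℕ) :
    AEStronglyMeasurable (fun t : ℝ => (aTerm u n ⌊(n : ℝ) * t⌋) ^ 2) volume := by
  have h1 : Measurable fun t : ℝ => ⌊(n : ℝ) * t⌋ :=
    Int.measurable_floor.comp (measurable_id.const_mul _)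
  exact ((measurable_from_top (f := fun x : ℤ => (aTerm u n x) ^ 2)).comp h1).aestronglyMeasurable

lemma dom {D : ℝ} (hD : 0 < D) (hdecay : ∀ y : ℝ, ‖v u y‖ ≤ D / (1 + y ^ 2)) (n : ℕ) (t : ℝ) :
    ‖(aTerm u n ⌊(n : ℝ) * t⌋) ^ 2‖ ≤ (18 * D) ^ 2 * (1 + t ^ 2)⁻¹ := by
  rcases Nat.eq_zero_or_pos n with rfl | hn
  · simp [aTerm]
    positivity
  · have hn0 : (0 : ℝ) < n := by exact_mod_cast hn
    have hn1 : 1 / (n : ℝ) ≤ 1 := by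
      rw [div_le_one hn0]; exact_mod_cast hn
    set x : ℤ := ⌊(n : ℝ) * t⌋ with hx
    have hat : (x : ℝ) / n ≤ t := by
      rw [div_le_iff₀ hn0]
      have := Int.floor_le ((n : ℝ) * t); rw [← hx] at this; linarith
    have hta : t < (x : ℝ) / n + 1 / n := by
      rw [← add_div, lt_div_iff₀ hn0]
      have := Int.lt_floor_add_one ((n : ℝ) * t); rw [← hx] at this
      push_cast
      linarith
    have hM : ∀ y ∈ Icc ((x : ℝ) / n - 1 / n) ((x : ℝ) / n + 1 / n),
        ‖v u y‖ ≤ 9 * D / (1 + t ^ 2) := by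
      intro y hy
      have hyt : (y - t) ^ 2 ≤ 4 := by
        obtain ⟨hy1, hy2⟩ := hy
        have h1 : y - t ≤ 2 := by
          have : y ≤ (x:ℝ)/n + 1/n := hy2
          nlinarith
        have h2 : t - y ≤ 2 := by nlinarith
        nlinarith
      refine le_trans (hdecay y) ?_
      rw [div_le_div_iff₀ (by positivity) (by positivity)]
      nlinarith [sq_nonneg (2 * y - t), hD.le]
    have h2 := aTerm_est2 u hn x hM
    rw [norm_pow]
    calc ‖aTerm u n x‖ ^ 2 ≤ (2 * (9 * D / (1 + t ^ 2))) ^ 2 := by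
          apply pow_le_pow_left₀ (norm_nonneg _) h2
      _ = (18 * D) ^ 2 / (1 + t ^ 2) ^ 2 := by
          rw [show (2:ℝ) * (9 * D / (1 + t ^ 2)) = 18 * D / (1 + t ^ 2) by ring, div_pow]
      _ ≤ (18 * D) ^ 2 / (1 + t ^ 2) := by
          apply div_le_div_of_nonneg_left (by positivity) (by positivity)
          nlinarith [sq_nonneg t, sq_nonneg (t^2)]
      _ = (18 * D) ^ 2 * (1 + t ^ 2)⁻¹ := by rw [div_eq_mul_inv]

lemma ptconv (t : ℝ) :
    Tendsto (fun n : ℕ => (aTerm u n ⌊(n : ℝ) * t⌋) ^ 2) atTop (nhds ((v u t) ^ 2)) := by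
  obtain ⟨C, hCpos, hC⟩ := v_lip u
  have key : ∀ n : ℕ, 1 ≤ n → |aTerm u n ⌊(n : ℝ) * t⌋ - v u t| ≤ 3 * C / n := by
    intro n hn
    have hn0 : (0 : ℝ) < n := by exact_mod_cast hn
    set x : ℤ := ⌊(n : ℝ) * t⌋ with hx
    have hat : (x : ℝ) / n ≤ t := by
      rw [div_le_iff₀ hn0]
      have := Int.floor_le ((n : ℝ) * t); rw [← hx] at this; linarith
    have hta : t < (x : ℝ) / n + 1 / n := by
      rw [← add_div, lt_div_iff₀ hn0]
      have := Int.lt_floor_add_one ((n : ℝ) * t); rw [← hx] at this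
      push_cast
      linarith
    have h1 := aTerm_est1 u hC hn x
    have h2 : ‖v u ((x : ℝ) / n) - v u t‖ ≤ C / n := by
      refine le_trans (hC _ _) ?_
      have habs : |(x : ℝ) / n - t| ≤ 1 / n := by
        rw [abs_le]; constructor <;> linarith
      rw [Real.norm_eq_abs]
      calc C * |(x : ℝ) / n - t| ≤ C * (1 / n) := mul_le_mul_of_nonneg_left habs hCpos.le
        _ = C / n := by ring
    calc |aTerm u n x - v u t|
        ≤ |aTerm u n x - v u ((x : ℝ) / n)| + |v u ((x : ℝ) / n) - v u t| := by
          have := abs_sub_le (aTerm u n x) (v u ((x : ℝ) / n)) (v u t)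
          simpa using this
      _ ≤ 2 * C / n + C / n := add_le_add h1 h2
      _ = 3 * C / n := by ring
  have habs : Tendsto (fun n : ℕ => |aTerm u n ⌊(n : ℝ) * t⌋ - v u t|) atTop (nhds 0) := by
    refine squeeze_zero' (Eventually.of_forall fun n => abs_nonneg _)
      (eventually_atTop.2 ⟨1, key⟩) ?_
    exact tendsto_const_div_atTop_nhds_zero_nat _
  have hbase : Tendsto (fun n : ℕ => aTerm u n ⌊(n : ℝ) * t⌋) atTop (nhds (v u t)) := by
    rw [tendsto_iff_norm_sub_tendsto_zero]
    simpa [Real.norm_eq_abs] using habs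
  exact hbase.pow 2

lemma v_eq (y : ℝ) : deriv (deriv ⇑u) y = v u y := by
  have h1 : deriv ⇑u = ⇑(derivCLM ℝ ℝ u) := funext fun z => (derivCLM_apply ℝ u z).symm
  rw [h1, v, derivCLM_apply]

end DLaux

/-- For every Schwartz function `u`, the discrete Laplacian energies converge:
`lim_{n→∞} (1/n) Σ_{x∈ℤ} (n²·(u((x+1)/n) + u((x−1)/n) − 2u(x/n)))² = ∫_ℝ (u''(x))² dx`. -/
theorem discrete_laplacian_energy_tendsto (u : SchwartzMap ℝ ℝ) :
    Tendsto
      (fun n : ℕ =>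
        (1 / (n : ℝ)) *
          ∑' x : ℤ,
            ((n : ℝ) ^ 2 *
              (u (((x : ℝ) + 1) / n) + u (((x : ℝ) - 1) / n) - 2 * u ((x : ℝ) / n))) ^ 2)
      atTop (nhds (∫ x : ℝ, (deriv (deriv (⇑u)) x) ^ 2)) := by
  classical
  obtain ⟨D, hD, hdecay⟩ := DLaux.v_decay u
  have hbound_int : Integrable (fun t : ℝ => (18 * D) ^ 2 * (1 + t ^ 2)⁻¹) :=
    integrable_inv_one_add_sq.const_mul _
  have hconv : Tendsto (fun n : ℕ => ∫ t : ℝ, (DLaux.aTerm u n ⌊(n : ℝ) * t⌋) ^ 2) atTop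
      (nhds (∫ t : ℝ, (DLaux.v u t) ^ 2)) :=
    tendsto_integral_of_dominated_convergence _ (fun n => DLaux.meas u n) hbound_int
      (fun n => Eventually.of_forall (DLaux.dom u hD hdecay n))
      (Eventually.of_forall (DLaux.ptconv u))
  have hlim : (∫ x : ℝ, (deriv (deriv (⇑u)) x) ^ 2) = ∫ t : ℝ, (DLaux.v u t) ^ 2 := by
    simp only [DLaux.v_eq]
  rw [hlim]
  refine Tendsto.congr' ?_ hconv
  filter_upwards [eventually_ge_atTop 1] with n hn
  have hint : Integrable (fun t : ℝ => (DLaux.aTerm u n ⌊(n : ℝ) * t⌋) ^ 2) :=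
    hbound_int.mono' (DLaux.meas u n) (Eventually.of_forall (DLaux.dom u hD hdecay n))
  rw [DLaux.step_integral u hn hint, tsum_mul_left]
  simp only [DLaux.aTerm]
end

section
/- Let X₁ and X₂ be real random variables on the same probability space with E[X₁²] < ∞ and E[X₂⁴] < ∞, and set X = X₁ + X₂. Then for every M > 0, E[ X² · 1_{X² > M} ] ≤ 2·( E[X₁²] + √( E[X₂⁴]·E[X²] / M ) ). -/
open MeasureTheory
open scoped ENNReal NNReal

lemma aux_sqrt_bound (a b c : ℝ) (ha : 0 ≤ a) (hb : 0 ≤ b)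
    (h : ∀ t > 0, c ≤ a / (2 * t) + t * b / 2) : c ≤ Real.sqrt (a * b) := by
  rcases eq_or_lt_of_le ha with ha0 | ha0
  · -- a = 0
    have : c ≤ 0 := by
      refine le_of_forall_pos_le_add fun ε hε => ?_
      have ht : (0:ℝ) < 2 * ε / (b + 1) := by positivity
      have := h _ ht
      rw [← ha0] at this
      have hb1 : (0:ℝ) < b + 1 := by linarith
      have h2 : c ≤ (2 * ε / (b + 1)) * b / 2 := by simpa using this
      have hle : (2 * ε / (b + 1)) * b / 2 ≤ ε := by
        rw [div_mul_eq_mul_div, div_div, div_le_iff₀ (by positivity)]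
        nlinarith
      linarith
    calc c ≤ 0 := this
      _ ≤ _ := Real.sqrt_nonneg _
  rcases eq_or_lt_of_le hb with hb0 | hb0
  · -- b = 0
    have : c ≤ 0 := by
      refine le_of_forall_pos_le_add fun ε hε => ?_
      have ht : (0:ℝ) < a / (2 * ε) + 1 := by positivity
      have h2 := h _ ht
      rw [← hb0] at h2
      have key : ε * (2 * (a / (2 * ε) + 1)) = a + 2 * ε := by
        field_simp
      have hle : a / (2 * (a / (2 * ε) + 1)) ≤ ε := by
        rw [div_le_iff₀ (by positivity), key]
        linarith
      simp only [mul_zero, zero_div, add_zero] at h2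
      linarith
    calc c ≤ 0 := this
      _ ≤ _ := Real.sqrt_nonneg _
  · have hsa : (0:ℝ) < Real.sqrt a := Real.sqrt_pos.2 ha0
    have hsb : (0:ℝ) < Real.sqrt b := Real.sqrt_pos.2 hb0
    have hsa2 : Real.sqrt a ^ 2 = a := Real.sq_sqrt ha
    have hsb2 : Real.sqrt b ^ 2 = b := Real.sq_sqrt hb
    have ht : (0:ℝ) < Real.sqrt a / Real.sqrt b := by positivity
    have h2 := h _ ht
    rw [Real.sqrt_mul ha]
    have heq : a / (2 * (Real.sqrt a / Real.sqrt b)) + (Real.sqrt a / Real.sqrt b) * b / 2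
        = Real.sqrt a * Real.sqrt b := by
      field_simp
      nlinarith
    linarith [heq ▸ h2]

/-- Truncation estimate: if `X = X₁ + X₂` with `E[X₁²] < ∞` and `E[X₂⁴] < ∞`, then for every
`M > 0`, `E[X²·1_{X²>M}] ≤ 2(E[X₁²] + √(E[X₂⁴]·E[X²]/M))`. -/
theorem truncated_second_moment_bound
    {Ω : Type*} [MeasurableSpace Ω] (μ : Measure Ω) [IsProbabilityMeasure μ]
    (X₁ X₂ : Ω → ℝ) (h1 : MemLp X₁ 2 μ) (h2 : MemLp X₂ 4 μ) (M : ℝ) (hM : 0 < M) :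
    ∫ ω in {ω | (X₁ ω + X₂ ω) ^ 2 > M}, (X₁ ω + X₂ ω) ^ 2 ∂μ
      ≤ 2 * ((∫ ω, X₁ ω ^ 2 ∂μ) +
          Real.sqrt ((∫ ω, X₂ ω ^ 4 ∂μ) * (∫ ω, (X₁ ω + X₂ ω) ^ 2 ∂μ) / M)) := by
  set X : Ω → ℝ := fun ω => X₁ ω + X₂ ω with hXdef
  show ∫ ω in {ω | X ω ^ 2 > M}, X ω ^ 2 ∂μ
      ≤ 2 * ((∫ ω, X₁ ω ^ 2 ∂μ) +
          Real.sqrt ((∫ ω, X₂ ω ^ 4 ∂μ) * (∫ ω, X ω ^ 2 ∂μ) / M))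
  set A : Set Ω := {ω | X ω ^ 2 > M} with hAdef
  have hX2 : MemLp X₂ 2 μ := h2.mono_exponent (by norm_num)
  have hX : MemLp X 2 μ := h1.add hX2
  have hi1 : Integrable (fun ω => X₁ ω ^ 2) μ := h1.integrable_sq
  have hi2 : Integrable (fun ω => X₂ ω ^ 2) μ := hX2.integrable_sq
  have hiX : Integrable (fun ω => X ω ^ 2) μ := hX.integrable_sq
  have hi4 : Integrable (fun ω => X₂ ω ^ 4) μ := by
    have h := h2.integrable_norm_rpow (by norm_num) (by norm_num)
    refine h.congr (Filter.Eventually.of_forall fun ω => ?_)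
    show ‖X₂ ω‖ ^ ((4:ℝ≥0∞)).toReal = X₂ ω ^ 4
    rw [show ((4:ℝ≥0∞)).toReal = ((4:ℕ):ℝ) by norm_num, Real.rpow_natCast,
      Real.norm_eq_abs, pow_abs, abs_of_nonneg (by positivity)]
  have hI1 : (0:ℝ) ≤ ∫ ω, X₁ ω ^ 2 ∂μ := integral_nonneg fun ω => sq_nonneg _
  have hI2 : (0:ℝ) ≤ ∫ ω, X₂ ω ^ 4 ∂μ := integral_nonneg fun ω => by positivity
  have hIX : (0:ℝ) ≤ ∫ ω, X ω ^ 2 ∂μ := integral_nonneg fun ω => sq_nonneg _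
  have hXm : AEMeasurable X μ := hX.aestronglyMeasurable.aemeasurable
  have hAnm : NullMeasurableSet A μ :=
    (hXm.pow_const 2).nullMeasurable (measurableSet_Ioi (a := M))
  -- Markov: μ A ≤ IX / M
  have hMarkov : (μ A).toReal ≤ (∫ ω, X ω ^ 2 ∂μ) / M := by
    have hm1 : M * (μ A).toReal ≤ ∫ ω in A, X ω ^ 2 ∂μ := by
      have : ∫ ω in A, (M:ℝ) ∂μ ≤ ∫ ω in A, X ω ^ 2 ∂μ := by
        refine integral_mono_ae (integrable_const M).restrict hiX.restrict ?_
        filter_upwards [ae_restrict_mem₀ hAnm] with ω hω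
        exact le_of_lt hω
      simpa [setIntegral_const, mul_comm, measureReal_def] using this
    have hm2 : ∫ ω in A, X ω ^ 2 ∂μ ≤ ∫ ω, X ω ^ 2 ∂μ :=
      setIntegral_le_integral hiX (Filter.Eventually.of_forall fun ω => sq_nonneg _)
    rw [le_div_iff₀ hM]
    linarith
  -- key bound on ∫_A X₂²
  have hkey : ∫ ω in A, X₂ ω ^ 2 ∂μ
      ≤ Real.sqrt ((∫ ω, X₂ ω ^ 4 ∂μ) * ((∫ ω, X ω ^ 2 ∂μ) / M)) := by
    refine aux_sqrt_bound _ _ _ hI2 (by positivity) fun t ht => ?_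
    have step1 : ∫ ω in A, X₂ ω ^ 2 ∂μ ≤ ∫ ω in A, (X₂ ω ^ 4 / (2 * t) + t / 2) ∂μ := by
      refine integral_mono_ae hi2.restrict
        ((hi4.restrict.div_const _).add (integrable_const _).restrict)
        (Filter.Eventually.of_forall fun ω => ?_)
      show X₂ ω ^ 2 ≤ X₂ ω ^ 4 / (2 * t) + t / 2
      rw [show X₂ ω ^ 4 / (2 * t) + t / 2 = (X₂ ω ^ 4 + t ^ 2) / (2 * t) by
        field_simp, le_div_iff₀ (by positivity)]
      nlinarith [sq_nonneg (X₂ ω ^ 2 - t)]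
    have step2 : ∫ ω in A, (X₂ ω ^ 4 / (2 * t) + t / 2) ∂μ
        = (∫ ω in A, X₂ ω ^ 4 ∂μ) / (2 * t) + t / 2 * (μ A).toReal := by
      rw [integral_add (hi4.restrict.div_const _) (integrable_const _).restrict,
        integral_div, setIntegral_const, smul_eq_mul, measureReal_def]
      ring
    have hset : ∫ ω in A, X₂ ω ^ 4 ∂μ ≤ ∫ ω, X₂ ω ^ 4 ∂μ :=
      setIntegral_le_integral hi4 (Filter.Eventually.of_forall fun ω => by positivity)
    have step3 : (∫ ω in A, X₂ ω ^ 4 ∂μ) / (2 * t) ≤ (∫ ω, X₂ ω ^ 4 ∂μ) / (2 * t) := by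
      apply div_le_div_of_nonneg_right hset (by positivity)
    have step4 : t / 2 * (μ A).toReal ≤ t * ((∫ ω, X ω ^ 2 ∂μ) / M) / 2 := by
      nlinarith [mul_le_mul_of_nonneg_left hMarkov (le_of_lt ht)]
    linarith [step2 ▸ step1]
  -- split X² ≤ 2X₁² + 2X₂²
  have hsplit : ∫ ω in A, X ω ^ 2 ∂μ
      ≤ 2 * (∫ ω, X₁ ω ^ 2 ∂μ) + 2 * ∫ ω in A, X₂ ω ^ 2 ∂μ := by
    have p1 : ∫ ω in A, X ω ^ 2 ∂μ ≤ ∫ ω in A, (2 * X₁ ω ^ 2 + 2 * X₂ ω ^ 2) ∂μ := by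
      refine integral_mono_ae hiX.restrict
        ((hi1.restrict.const_mul _).add (hi2.restrict.const_mul _))
        (Filter.Eventually.of_forall fun ω => ?_)
      show X ω ^ 2 ≤ 2 * X₁ ω ^ 2 + 2 * X₂ ω ^ 2
      simp only [hXdef]
      nlinarith [sq_nonneg (X₁ ω - X₂ ω)]
    have p2 : ∫ ω in A, (2 * X₁ ω ^ 2 + 2 * X₂ ω ^ 2) ∂μ
        = 2 * (∫ ω in A, X₁ ω ^ 2 ∂μ) + 2 * ∫ ω in A, X₂ ω ^ 2 ∂μ := by
      rw [integral_add (hi1.restrict.const_mul _) (hi2.restrict.const_mul _),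
        integral_const_mul, integral_const_mul]
    have p3 : ∫ ω in A, X₁ ω ^ 2 ∂μ ≤ ∫ ω, X₁ ω ^ 2 ∂μ :=
      setIntegral_le_integral hi1 (Filter.Eventually.of_forall fun ω => sq_nonneg _)
    linarith [p2 ▸ p1]
  have hkey' : ∫ ω in A, X₂ ω ^ 2 ∂μ
      ≤ Real.sqrt ((∫ ω, X₂ ω ^ 4 ∂μ) * (∫ ω, X ω ^ 2 ∂μ) / M) := by
    rw [mul_div_assoc]
    exact hkey
  linarith [hsplit, hkey']
end

section
/- With F, θ, θ_M and F_M as defined, the discrete energies of F_M − F_N vanish uniformly in the scaling parameter: lim_{M,N→∞} sup_{n∈ℕ, n≥1} (1/n) Σ_{x∈ℤ} ( n·( (F_M − F_N)((x+1)/n) − (F_M − F_N)(x/n) ) )² = 0; that is, for every ε > 0 there exists M₀ such that for all M, N ≥ M₀ and all n ≥ 1 the discrete energy E_n(F_M − F_N) is less than ε. -/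
open MeasureTheory Filter

/-- `F(x) = (1+e^{−x})^{−1}`. -/
noncomputable def F (x : ℝ) : ℝ := (1 + Real.exp (-x))⁻¹

/-- The cutoff `θ(x) = (∫_x^∞ e^{−1/(y(1−y))} 1_{0<y<1} dy) / (∫_0^1 e^{−1/(y(1−y))} dy)`. -/
noncomputable def θ (x : ℝ) : ℝ :=
  (∫ y in Set.Ioi x, if 0 < y ∧ y < 1 then Real.exp (-(1 / (y * (1 - y)))) else 0) /
    (∫ y in Set.Ioo (0 : ℝ) 1, Real.exp (-(1 / (y * (1 - y)))))

noncomputable def fI (y : ℝ) : ℝ :=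
  if 0 < y ∧ y < 1 then Real.exp (-(1 / (y * (1 - y)))) else 0

noncomputable def Zc : ℝ := ∫ y in Set.Ioo (0 : ℝ) 1, Real.exp (-(1 / (y * (1 - y))))

noncomputable def Iθ (x : ℝ) : ℝ := ∫ y in Set.Ioi x, fI y

lemma θ_eq (x : ℝ) : θ x = Iθ x / Zc := rfl

lemma fI_eq_indicator :
    fI = (Set.Ioo (0:ℝ) 1).indicator (fun y => Real.exp (-(1 / (y * (1 - y))))) := by
  funext y
  simp [fI, Set.indicator, Set.mem_Ioo]

lemma fI_nonneg (y : ℝ) : 0 ≤ fI y := by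
  unfold fI; split <;> positivity

lemma fI_le_one (y : ℝ) : fI y ≤ 1 := by
  unfold fI
  split
  · next h =>
    rw [Real.exp_le_one_iff]
    have h1 : 0 < y * (1 - y) := mul_pos h.1 (by linarith [h.2])
    have : 0 ≤ 1 / (y * (1 - y)) := by positivity
    linarith
  · norm_num

lemma fI_measurable : Measurable fI := by
  unfold fI
  apply Measurable.ite
  · exact (measurableSet_lt measurable_const measurable_id).inter
      (measurableSet_lt measurable_id measurable_const)
  · fun_prop
  · fun_prop

lemma fI_integrable : Integrable fI := by
  rw [fI_eq_indicator]
  refine Integrable.mono' (g := (Set.Ioo (0:ℝ) 1).indicator (fun _ => 1)) ?_ ?_ ?_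
  · rw [integrable_indicator_iff measurableSet_Ioo]
    exact integrableOn_const (by simp [Real.volume_Ioo])
  · exact (fI_eq_indicator ▸ fI_measurable).aestronglyMeasurable
  · filter_upwards with y
    by_cases hy : y ∈ Set.Ioo (0:ℝ) 1
    · rw [Set.indicator_of_mem hy, Set.indicator_of_mem hy, Real.norm_eq_abs,
        abs_of_nonneg (by positivity)]
      have := fI_le_one y
      rw [fI_eq_indicator, Set.indicator_of_mem hy] at this
      exact this
    · simp [Set.indicator_of_notMem hy]

lemma Zc_pos : 0 < Zc := by
  unfold Zc
  rw [setIntegral_pos_iff_support_of_nonneg_ae]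
  · have : (Function.support fun y : ℝ => Real.exp (-(1 / (y * (1 - y))))) = Set.univ := by
      ext y; simp [Function.mem_support, (Real.exp_pos _).ne']
    rw [this, Set.univ_inter]
    simp [Real.volume_Ioo]
  · filter_upwards with y using (Real.exp_pos _).le
  · exact (integrable_indicator_iff measurableSet_Ioo).1 (fI_eq_indicator ▸ fI_integrable)
lemma Iθ_eq_Zc_of_nonpos {x : ℝ} (hx : x ≤ 0) : Iθ x = Zc := by
  unfold Iθ Zc
  rw [fI_eq_indicator, setIntegral_indicator measurableSet_Ioo]
  have hset : Set.Ioi x ∩ Set.Ioo (0:ℝ) 1 = Set.Ioo (0:ℝ) 1 :=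
    Set.inter_eq_self_of_subset_right (fun y hy => lt_of_le_of_lt hx hy.1)
  rw [hset]

lemma Iθ_eq_zero_of_one_le {x : ℝ} (hx : 1 ≤ x) : Iθ x = 0 := by
  unfold Iθ
  rw [fI_eq_indicator, setIntegral_indicator measurableSet_Ioo]
  have : Set.Ioi x ∩ Set.Ioo (0:ℝ) 1 = ∅ := by
    ext y
    simp only [Set.mem_inter_iff, Set.mem_Ioi, Set.mem_Ioo, Set.mem_empty_iff_false, iff_false]
    rintro ⟨h1, _, h3⟩; linarith
  rw [this, Measure.restrict_empty, integral_zero_measure]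

lemma Iθ_diff {x y : ℝ} (hxy : x ≤ y) :
    Iθ x - Iθ y = ∫ t in Set.Ioc x y, fI t := by
  unfold Iθ
  have h : Set.Ioc x y ∪ Set.Ioi y = Set.Ioi x := Set.Ioc_union_Ioi_eq_Ioi hxy
  rw [← h, setIntegral_union (Set.Ioc_disjoint_Ioi le_rfl) measurableSet_Ioi
    fI_integrable.integrableOn fI_integrable.integrableOn]
  ring

lemma Iθ_antitone : Antitone Iθ := by
  intro x y hxy
  have h := Iθ_diff hxy
  have h2 : 0 ≤ ∫ t in Set.Ioc x y, fI t :=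
    setIntegral_nonneg measurableSet_Ioc fun t _ => fI_nonneg t
  linarith

lemma Iθ_diff_le {x y : ℝ} (hxy : x ≤ y) : Iθ x - Iθ y ≤ y - x := by
  rw [Iθ_diff hxy]
  calc ∫ t in Set.Ioc x y, fI t ≤ ∫ _ in Set.Ioc x y, (1:ℝ) := by
        apply setIntegral_mono_on fI_integrable.integrableOn
          (integrableOn_const (by simp [Real.volume_Ioc]))
          measurableSet_Ioc
        exact fun t _ => fI_le_one t
    _ = y - x := by
        simp [Real.volume_Ioc, ENNReal.toReal_ofReal (by linarith : (0:ℝ) ≤ y - x), hxy]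

lemma Iθ_nonneg (x : ℝ) : 0 ≤ Iθ x :=
  setIntegral_nonneg measurableSet_Ioi fun t _ => fI_nonneg t

lemma Iθ_le_Zc (x : ℝ) : Iθ x ≤ Zc := by
  rcases le_or_gt x 0 with h | h
  · exact (Iθ_eq_Zc_of_nonpos h).le
  · have := Iθ_antitone h.le
    rwa [Iθ_eq_Zc_of_nonpos le_rfl] at this

lemma θ_nonneg (x : ℝ) : 0 ≤ θ x := by
  rw [θ_eq]; exact div_nonneg (Iθ_nonneg x) Zc_pos.le

lemma θ_le_one (x : ℝ) : θ x ≤ 1 := by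
  rw [θ_eq, div_le_one Zc_pos]; exact Iθ_le_Zc x

lemma θ_eq_one {x : ℝ} (hx : x ≤ 0) : θ x = 1 := by
  rw [θ_eq, Iθ_eq_Zc_of_nonpos hx, div_self Zc_pos.ne']

lemma θ_eq_zero {x : ℝ} (hx : 1 ≤ x) : θ x = 0 := by
  rw [θ_eq, Iθ_eq_zero_of_one_le hx, zero_div]

lemma θ_diff_nonneg {x y : ℝ} (hxy : x ≤ y) : 0 ≤ θ x - θ y := by
  rw [θ_eq, θ_eq, div_sub_div_same]
  have := Iθ_antitone hxy
  exact div_nonneg (by linarith) Zc_pos.le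

lemma θ_diff_le {x y : ℝ} (hxy : x ≤ y) : θ x - θ y ≤ (y - x) / Zc := by
  rw [θ_eq, θ_eq, div_sub_div_same]
  exact (div_le_div_iff_of_pos_right Zc_pos).2 (Iθ_diff_le hxy)

lemma one_sub_θ_le {t : ℝ} (ht : 0 ≤ t) : 1 - θ t ≤ t / Zc := by
  have := θ_diff_le ht
  rwa [θ_eq_one le_rfl, sub_zero] at this
lemma F_pos (x : ℝ) : 0 < F x := by
  unfold F; positivity

lemma F_le_one (x : ℝ) : F x ≤ 1 := by
  unfold F
  rw [inv_le_one_iff₀]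
  right
  linarith [Real.exp_pos (-x)]

lemma F_diff_nonneg {a b : ℝ} (hab : a ≤ b) : 0 ≤ F b - F a := by
  unfold F
  have h1 : Real.exp (-b) ≤ Real.exp (-a) := Real.exp_le_exp.2 (by linarith)
  have h2 : (0:ℝ) < 1 + Real.exp (-b) := by positivity
  have h3 : (0:ℝ) < 1 + Real.exp (-a) := by positivity
  have := one_div_le_one_div_of_le h2 (by linarith : 1 + Real.exp (-b) ≤ 1 + Real.exp (-a))
  simp only [one_div] at this
  linarith

lemma F_diff_le {a b : ℝ} (hab : a ≤ b) : F b - F a ≤ Real.exp (-a) * (b - a) := by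
  have hu : (0:ℝ) < Real.exp (-a) := Real.exp_pos _
  have hv : (0:ℝ) < Real.exp (-b) := Real.exp_pos _
  have h2 : (0:ℝ) < 1 + Real.exp (-b) := by positivity
  have h3 : (0:ℝ) < 1 + Real.exp (-a) := by positivity
  have hXa : F a * (1 + Real.exp (-a)) = 1 := by
    unfold F; rw [inv_mul_cancel₀ (by positivity)]
  have hXb : F b * (1 + Real.exp (-b)) = 1 := by
    unfold F; rw [inv_mul_cancel₀ (by positivity)]
  have hidd : F b - F a = F a * F b * (Real.exp (-a) - Real.exp (-b)) := by
    linear_combination F a * hXb - F b * hXa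
  have h1 : Real.exp (-b) ≤ Real.exp (-a) := Real.exp_le_exp.2 (by linarith)
  have h1 : Real.exp (-b) ≤ Real.exp (-a) := Real.exp_le_exp.2 (by linarith)
  have hprod : F a * F b ≤ 1 :=
    mul_le_one₀ (F_le_one a) (F_pos b).le (F_le_one b)
  have hstep1 : F b - F a ≤ Real.exp (-a) - Real.exp (-b) := by
    rw [hidd]
    nlinarith [mul_pos (F_pos a) (F_pos b)]
  have hstep2 : Real.exp (-a) - Real.exp (-b) ≤ Real.exp (-a) * (b - a) := by
    have hexp : Real.exp (-b) = Real.exp (-a) * Real.exp (-(b - a)) := by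
      rw [← Real.exp_add]; ring_nf
    have h4 : 1 - (b - a) ≤ Real.exp (-(b - a)) := by
      have := Real.add_one_le_exp (-(b - a)); linarith
    rw [hexp]
    nlinarith
  linarith

lemma aux_geom (C : ℝ) (hC : 0 ≤ C) (n : ℕ) (hn : 1 ≤ n) :
    Summable (fun x : ℤ => if 0 ≤ x then C * Real.exp (-((x:ℝ)/n)) else 0) ∧
    (∑' x : ℤ, (if 0 ≤ x then C * Real.exp (-((x:ℝ)/n)) else 0))
      ≤ C * (n * Real.exp 1) := by
  have hnp : (0:ℝ) < n := by exact_mod_cast hn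
  set f : ℤ → ℝ := fun x => if 0 ≤ x then C * Real.exp (-((x:ℝ)/n)) else 0 with hf
  set r : ℝ := Real.exp (-(1/(n:ℝ))) with hrdef
  have hr0 : 0 ≤ r := (Real.exp_pos _).le
  have hr1 : r < 1 := by
    rw [hrdef, Real.exp_lt_one_iff]
    simp only [neg_neg, Left.neg_neg_iff]
    positivity
  have hcomp : ∀ k : ℕ, f (k : ℤ) = C * r ^ k := by
    intro k
    rw [hf]
    simp only [Int.natCast_nonneg, if_pos, Int.cast_natCast]
    rw [hrdef, ← Real.exp_nat_mul]
    congr 2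
    field_simp
  have hinj : Function.Injective ((↑) : ℕ → ℤ) := (Nat.cast_injective : Function.Injective ((↑) : ℕ → ℤ))
  have hsupp : ∀ x : ℤ, x ∉ Set.range ((↑) : ℕ → ℤ) → f x = 0 := by
    intro x hx
    rw [hf]
    apply if_neg
    intro h0
    exact hx ⟨x.toNat, Int.toNat_of_nonneg h0⟩
  have hsummN : Summable (f ∘ ((↑) : ℕ → ℤ)) := by
    apply Summable.congr ((summable_geometric_of_lt_one hr0 hr1).mul_left C)
    intro k
    exact (hcomp k).symm
  have hsum : Summable f := (hinj.summable_iff hsupp).1 hsummN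
  constructor
  · exact hsum
  · have hts : (∑' x : ℤ, f x) = ∑' k : ℕ, f (k : ℤ) := by
      refine (hinj.tsum_eq ?_).symm
      intro x hx
      by_contra hmem
      exact hx (hsupp x hmem)
    rw [hts]
    have : (∑' k : ℕ, f (k : ℤ)) = C * (1 - r)⁻¹ := by
      rw [tsum_congr hcomp, tsum_mul_left, tsum_geometric_of_lt_one hr0 hr1]
    rw [this]
    have hrlow : Real.exp (-1) ≤ r := by
      rw [hrdef]
      apply Real.exp_le_exp.2
      have h1 : 1/(n:ℝ) ≤ 1 := by
        rw [div_le_one hnp]; exact_mod_cast hn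
      linarith
    have hone : 1/((n:ℝ) * Real.exp 1) ≤ 1 - r := by
      have key : (1/(n:ℝ)) * r ≤ 1 - r := by
        have h5 : 1 + 1/(n:ℝ) ≤ Real.exp (1/(n:ℝ)) := by
          have := Real.add_one_le_exp (1/(n:ℝ)); linarith
        have h6 : Real.exp (1/(n:ℝ)) * r = 1 := by
          rw [hrdef, ← Real.exp_add]; simp
        nlinarith [Real.exp_pos (-(1/(n:ℝ)))]
      have h7 : 1/((n:ℝ) * Real.exp 1) = (1/(n:ℝ)) * Real.exp (-1) := by
        rw [Real.exp_neg]; field_simp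
      have h8 : (1/(n:ℝ)) * Real.exp (-1) ≤ (1/(n:ℝ)) * r :=
        mul_le_mul_of_nonneg_left hrlow (by positivity)
      linarith
    have h9 : (1 - r)⁻¹ ≤ (n:ℝ) * Real.exp 1 := by
      have hpos : (0:ℝ) < 1/((n:ℝ) * Real.exp 1) := by positivity
      calc (1 - r)⁻¹ ≤ (1/((n:ℝ) * Real.exp 1))⁻¹ :=
            inv_anti₀ hpos hone
        _ = (n:ℝ) * Real.exp 1 := by rw [one_div, inv_inv]
    exact mul_le_mul_of_nonneg_left h9 hC

lemma aux_fin (C : ℝ) (hC : 0 ≤ C) (K : ℕ) :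
    Summable (fun x : ℤ => if 0 ≤ x ∧ x < (K:ℤ) then C else 0) ∧
    (∑' x : ℤ, (if 0 ≤ x ∧ x < (K:ℤ) then C else 0)) ≤ (K:ℝ) * C := by
  set f : ℤ → ℝ := fun x => if 0 ≤ x ∧ x < (K:ℤ) then C else 0 with hf
  have hinj : Function.Injective ((↑) : ℕ → ℤ) := (Nat.cast_injective : Function.Injective ((↑) : ℕ → ℤ))
  have hsupp : ∀ x : ℤ, x ∉ Set.range ((↑) : ℕ → ℤ) → f x = 0 := by
    intro x hx
    rw [hf]
    apply if_neg
    rintro ⟨h0, _⟩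
    exact hx ⟨x.toNat, Int.toNat_of_nonneg h0⟩
  have hcompzero : ∀ k : ℕ, k ∉ Finset.range K → f (k : ℤ) = 0 := by
    intro k hk
    rw [hf]
    apply if_neg
    rintro ⟨_, h1⟩
    exact hk (Finset.mem_range.2 (by exact_mod_cast h1))
  have hsummN : Summable (f ∘ ((↑) : ℕ → ℤ)) :=
    summable_of_ne_finset_zero (s := Finset.range K) hcompzero
  have hsum : Summable f := (hinj.summable_iff hsupp).1 hsummN
  refine ⟨hsum, ?_⟩
  have hts : (∑' x : ℤ, f x) = ∑' k : ℕ, f (k : ℤ) := by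
    refine (hinj.tsum_eq ?_).symm
    intro x hx
    by_contra hmem
    exact hx (hsupp x hmem)
  rw [hts, tsum_eq_sum hcompzero]
  calc ∑ k ∈ Finset.range K, f (k : ℤ) ≤ ∑ _k ∈ Finset.range K, C := by
        apply Finset.sum_le_sum
        intro k _
        by_cases h : (0:ℤ) ≤ (k:ℤ) ∧ (k:ℤ) < (K:ℤ)
        · simp only [hf, if_pos h]
          exact le_rfl
        · simp only [hf, if_neg h]
          exact hC
    _ = (K:ℝ) * C := by rw [Finset.sum_const, Finset.card_range, nsmul_eq_mul]
/-- The truncation `F_M(x) = F(x)·θ(x/M)`. -/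
noncomputable def FM (M : ℕ) (x : ℝ) : ℝ := F x * θ (x / M)

/-- The discrete energy `E_n(u) = (1/n) Σ_{x∈ℤ} (n(u((x+1)/n) − u(x/n)))²`. -/
noncomputable def discreteEnergy (n : ℕ) (u : ℝ → ℝ) : ℝ :=
  (1 / (n : ℝ)) * ∑' x : ℤ, ((n : ℝ) * (u (((x : ℝ) + 1) / n) - u ((x : ℝ) / n))) ^ 2

set_option maxHeartbeats 1000000 in
/-- The discrete energies of `F_M − F_N` vanish uniformly in the scaling parameter: for
every `ε > 0` there is `M₀` such that for all `M, N ≥ M₀` and every `n ≥ 1`,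
`E_n(F_M − F_N) < ε`. -/
theorem discrete_energy_FM_cauchy_uniform :
    ∀ ε : ℝ, 0 < ε → ∃ M₀ : ℕ, ∀ M N : ℕ, M₀ ≤ M → M₀ ≤ N → ∀ n : ℕ, 1 ≤ n →
      discreteEnergy n (fun x => FM M x - FM N x) < ε := by
  intro ε hε
  set c : ℝ := 1 / Zc with hcdef
  have hZ := Zc_pos
  have hc : 0 < c := by rw [hcdef]; positivity
  set K : ℝ := 3 * c * Real.exp 1 + 6 * c ^ 2 with hKdef
  have hK : 0 < K := by rw [hKdef]; positivity
  obtain ⟨M₀', hM₀'⟩ := exists_nat_gt (K / ε)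
  refine ⟨M₀' + 1, ?_⟩
  intro M N hM hN n hn
  set M₀ : ℕ := M₀' + 1 with hM₀def
  have hM₀pos : 0 < M₀ := Nat.succ_pos _
  have hM₀R : (0:ℝ) < M₀ := by exact_mod_cast hM₀pos
  have hnR : (1:ℝ) ≤ (n:ℝ) := by exact_mod_cast hn
  have hnpos : (0:ℝ) < n := by linarith
  have hMR : (M₀:ℝ) ≤ M := by exact_mod_cast hM
  have hNR : (M₀:ℝ) ≤ N := by exact_mod_cast hN
  have hMpos : (0:ℝ) < M := lt_of_lt_of_le hM₀R hMR
  have hNpos : (0:ℝ) < N := lt_of_lt_of_le hM₀R hNR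
  set mn : ℕ := min M N with hmndef
  have hmnM : (mn:ℝ) ≤ M := by exact_mod_cast Nat.cast_le.2 (min_le_left M N)
  have hmnN : (mn:ℝ) ≤ N := by exact_mod_cast Nat.cast_le.2 (min_le_right M N)
  have hmnR : (M₀:ℝ) ≤ mn := by exact_mod_cast le_min hM hN
  have hmnpos : (0:ℝ) < mn := lt_of_lt_of_le hM₀R hmnR
  -- the majorant
  set A : ℤ → ℝ := fun x =>
    (if 0 ≤ x then (3*c/(mn:ℝ)) * Real.exp (-((x:ℝ)/n)) else 0)
    + ((if 0 ≤ x ∧ x < ((M*n : ℕ):ℤ) then 3*c^2/(M:ℝ)^2 else 0)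
      + (if 0 ≤ x ∧ x < ((N*n : ℕ):ℤ) then 3*c^2/(N:ℝ)^2 else 0)) with hAdef
  obtain ⟨hs1, ht1⟩ := aux_geom (3*c/(mn:ℝ)) (by positivity) n hn
  obtain ⟨hs2, ht2⟩ := aux_fin (3*c^2/(M:ℝ)^2) (by positivity) (M*n)
  obtain ⟨hs3, ht3⟩ := aux_fin (3*c^2/(N:ℝ)^2) (by positivity) (N*n)
  have hAsum : Summable A := hs1.add (hs2.add hs3)
  -- bound on the tsum of A
  have htA : (∑' x : ℤ, A x) ≤ (n:ℝ) * K / M₀ := by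
    rw [hAdef]
    rw [Summable.tsum_add hs1 (hs2.add hs3), Summable.tsum_add hs2 hs3]
    have step1 : (3*c/(mn:ℝ)) * ((n:ℝ) * Real.exp 1) ≤ (n:ℝ) * (3*c*Real.exp 1) / M₀ := by
      calc (3*c/(mn:ℝ)) * ((n:ℝ) * Real.exp 1)
          = (3*c*Real.exp 1*(n:ℝ))/(mn:ℝ) := by ring
        _ ≤ (3*c*Real.exp 1*(n:ℝ))/(M₀:ℝ) := by
            apply div_le_div_of_nonneg_left (by positivity) hM₀R hmnR
        _ = (n:ℝ) * (3*c*Real.exp 1) / M₀ := by ring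
    have step2 : ((M*n : ℕ):ℝ) * (3*c^2/(M:ℝ)^2) ≤ (n:ℝ) * (3*c^2) / M₀ := by
      have hcast : ((M*n : ℕ):ℝ) = (M:ℝ) * n := by push_cast; ring
      rw [hcast]
      calc (M:ℝ) * n * (3*c^2/(M:ℝ)^2) = (3*c^2*(n:ℝ))/(M:ℝ) := by
            field_simp
        _ ≤ (3*c^2*(n:ℝ))/(M₀:ℝ) := by
            apply div_le_div_of_nonneg_left (by positivity) hM₀R hMR
        _ = (n:ℝ) * (3*c^2) / M₀ := by ring
    have step3 : ((N*n : ℕ):ℝ) * (3*c^2/(N:ℝ)^2) ≤ (n:ℝ) * (3*c^2) / M₀ := by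
      have hcast : ((N*n : ℕ):ℝ) = (N:ℝ) * n := by push_cast; ring
      rw [hcast]
      calc (N:ℝ) * n * (3*c^2/(N:ℝ)^2) = (3*c^2*(n:ℝ))/(N:ℝ) := by
            field_simp
        _ ≤ (3*c^2*(n:ℝ))/(M₀:ℝ) := by
            apply div_le_div_of_nonneg_left (by positivity) hM₀R hNR
        _ = (n:ℝ) * (3*c^2) / M₀ := by ring
    have hfin : (n:ℝ) * (3*c*Real.exp 1) / M₀ + ((n:ℝ) * (3*c^2) / M₀ + (n:ℝ) * (3*c^2) / M₀)
        = (n:ℝ) * K / M₀ := by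
      rw [hKdef]; ring
    linarith [ht1, ht2, ht3, step1, step2, step3]
  -- main pointwise bound
  set T : ℤ → ℝ := fun x => ((n:ℝ) * ((FM M (((x:ℝ)+1)/n) - FM N (((x:ℝ)+1)/n))
      - (FM M ((x:ℝ)/n) - FM N ((x:ℝ)/n))))^2 with hTdef
  have hTnonneg : ∀ x : ℤ, 0 ≤ T x := fun x => sq_nonneg _
  have hbound : ∀ x : ℤ, T x ≤ A x := by
    intro x
    simp only [hTdef, hAdef]
    set a : ℝ := (x:ℝ)/n with hadef
    set b : ℝ := ((x:ℝ)+1)/n with hbdef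
    have hab : a ≤ b := by
      rw [hadef, hbdef]
      exact (div_le_div_iff_of_pos_right hnpos).2 (by linarith)
    have hba : b - a = 1/(n:ℝ) := by
      rw [hadef, hbdef]; field_simp; ring
    rcases lt_or_ge x 0 with hx | hx
    · -- x ≤ -1 : both sides vanish
      have hx1 : ((x:ℝ)+1) ≤ 0 := by
        have h : x + 1 ≤ 0 := by omega
        exact_mod_cast h
      have hb0 : b ≤ 0 := by
        rw [hbdef]; exact div_nonpos_of_nonpos_of_nonneg hx1 hnpos.le
      have ha0 : a ≤ 0 := le_trans hab hb0
      have hxneg : ¬ (0:ℤ) ≤ x := not_le.2 hx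
      rw [if_neg hxneg, if_neg (fun h => hxneg h.1), if_neg (fun h => hxneg h.1)]
      have hθ1 : ∀ (P : ℕ), (0:ℝ) < (P:ℝ) → ∀ t : ℝ, t ≤ 0 → θ (t / (P:ℝ)) = 1 := by
        intro P hP t ht
        exact θ_eq_one (div_nonpos_of_nonpos_of_nonneg ht hP.le)
      simp only [FM]
      rw [hθ1 M hMpos b hb0, hθ1 N hNpos b hb0, hθ1 M hMpos a ha0, hθ1 N hNpos a ha0]
      ring_nf
      norm_num
    · -- main case x ≥ 0
      have hxR : (0:ℝ) ≤ (x:ℝ) := by exact_mod_cast hx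
      have ha : 0 ≤ a := by rw [hadef]; positivity
      have hb : 0 ≤ b := le_trans ha hab
      rw [if_pos hx]
      set p : ℝ := (F b - F a) * (θ (b/(M:ℝ)) - θ (b/(N:ℝ))) with hpdef
      set q : ℝ := F a * (θ (b/(M:ℝ)) - θ (a/(M:ℝ))) with hqdef
      set r : ℝ := F a * (θ (b/(N:ℝ)) - θ (a/(N:ℝ))) with hrdef2
      have hdecomp : (FM M b - FM N b) - (FM M a - FM N a) = p + q - r := by
        rw [hpdef, hqdef, hrdef2]; simp only [FM]; ring
      have hFd1 : 0 ≤ F b - F a := F_diff_nonneg hab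
      have hFd2 : F b - F a ≤ Real.exp (-a) * (1/(n:ℝ)) := by
        have h := F_diff_le hab; rwa [hba] at h
      have honeθ : ∀ (P : ℕ), (mn:ℝ) ≤ (P:ℝ) → 1 - θ (b/(P:ℝ)) ≤ c * b / mn := by
        intro P hPmn
        have hPpos : (0:ℝ) < (P:ℝ) := lt_of_lt_of_le hmnpos hPmn
        have h1 := one_sub_θ_le (div_nonneg hb hPpos.le)
        calc 1 - θ (b/(P:ℝ)) ≤ (b/(P:ℝ))/Zc := h1
          _ = b/((P:ℝ)*Zc) := by rw [div_div]
          _ ≤ b/((mn:ℝ)*Zc) := by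
              apply div_le_div_of_nonneg_left hb (by positivity)
              exact mul_le_mul_of_nonneg_right hPmn hZ.le
          _ = c * b / mn := by rw [hcdef]; ring
      have hθM01 := And.intro (θ_nonneg (b/(M:ℝ))) (θ_le_one (b/(M:ℝ)))
      have hθN01 := And.intro (θ_nonneg (b/(N:ℝ))) (θ_le_one (b/(N:ℝ)))
      have hDle1 : |θ (b/(M:ℝ)) - θ (b/(N:ℝ))| ≤ 1 := by
        rw [abs_sub_le_iff]
        constructor <;> linarith [hθM01.1, hθM01.2, hθN01.1, hθN01.2]
      have hDle2 : |θ (b/(M:ℝ)) - θ (b/(N:ℝ))| ≤ c * b / mn := by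
        have h1 := honeθ M hmnM
        have h2 := honeθ N hmnN
        rw [abs_sub_le_iff]
        constructor
        · linarith [hθM01.2]
        · linarith [hθN01.2]
      have hexpa := Real.exp_pos (-a)
      have hkey : Real.exp (-a) * b ≤ 1 := by
        have h1 : a + 1 ≤ Real.exp a := Real.add_one_le_exp a
        have h2 : Real.exp (-a) * Real.exp a = 1 := by
          rw [← Real.exp_add]; simp
        have hble : b ≤ a + 1 := by
          have h3 : (1:ℝ)/n ≤ 1 := by
            rw [div_le_one hnpos]; exact hnR
          linarith [hba]
        calc Real.exp (-a) * b ≤ Real.exp (-a) * (a+1) :=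
              mul_le_mul_of_nonneg_left hble hexpa.le
          _ ≤ Real.exp (-a) * Real.exp a :=
              mul_le_mul_of_nonneg_left h1 hexpa.le
          _ = 1 := h2
      have hp2 : p^2 ≤ (Real.exp (-a) * (1/(n:ℝ)))^2 * (c * b / mn) := by
        rw [hpdef, mul_pow]
        have h1 : (F b - F a)^2 ≤ (Real.exp (-a) * (1/(n:ℝ)))^2 :=
          pow_le_pow_left₀ hFd1 hFd2 2
        have h2 : (θ (b/(M:ℝ)) - θ (b/(N:ℝ)))^2 ≤ c * b / mn := by
          rw [← sq_abs, sq]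
          calc |θ (b/(M:ℝ)) - θ (b/(N:ℝ))| * |θ (b/(M:ℝ)) - θ (b/(N:ℝ))|
              ≤ (c * b / mn) * 1 :=
                mul_le_mul hDle2 hDle1 (abs_nonneg _) (by positivity)
            _ = c * b / mn := mul_one _
        exact mul_le_mul h1 h2 (sq_nonneg _) (by positivity)
      have hnn2 : (n:ℝ)^2 * (1/(n:ℝ))^2 = 1 := by
        field_simp
      have hpkey : 3*(n:ℝ)^2 * p^2 ≤ (3*c/(mn:ℝ)) * Real.exp (-a) := by
        calc 3*(n:ℝ)^2 * p^2
            ≤ 3*(n:ℝ)^2 * ((Real.exp (-a) * (1/(n:ℝ)))^2 * (c * b / mn)) :=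
              mul_le_mul_of_nonneg_left hp2 (by positivity)
          _ = (3*c/(mn:ℝ)) * (Real.exp (-a) * (Real.exp (-a) * b))
                * ((n:ℝ)^2 * (1/(n:ℝ))^2) := by ring
          _ = (3*c/(mn:ℝ)) * (Real.exp (-a) * (Real.exp (-a) * b)) := by
              rw [hnn2, mul_one]
          _ ≤ (3*c/(mn:ℝ)) * (Real.exp (-a) * 1) := by
              apply mul_le_mul_of_nonneg_left _ (by positivity)
              exact mul_le_mul_of_nonneg_left hkey hexpa.le
          _ = (3*c/(mn:ℝ)) * Real.exp (-a) := by ring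
      have hgen : ∀ P : ℕ, (0:ℝ) < (P:ℝ) →
          3*(n:ℝ)^2 * (F a * (θ (b/(P:ℝ)) - θ (a/(P:ℝ))))^2
            ≤ (if 0 ≤ x ∧ x < ((P*n : ℕ):ℤ) then 3*c^2/(P:ℝ)^2 else 0) := by
        intro P hPpos
        have haPb : a/(P:ℝ) ≤ b/(P:ℝ) := (div_le_div_iff_of_pos_right hPpos).2 hab
        by_cases hlt : x < ((P*n : ℕ):ℤ)
        · rw [if_pos ⟨hx, hlt⟩]
          have h2 := θ_diff_le haPb
          have h3 := θ_diff_nonneg haPb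
          have h4 : (b/(P:ℝ) - a/(P:ℝ))/Zc = c/((n:ℝ)*P) := by
            have h5 : b/(P:ℝ) - a/(P:ℝ) = (b-a)/(P:ℝ) := by ring
            rw [h5, hba, hcdef]
            ring
          rw [h4] at h2
          have hbndP : 0 ≤ c/((n:ℝ)*P) := by positivity
          have hsq : (θ (b/(P:ℝ)) - θ (a/(P:ℝ)))^2 ≤ (c/((n:ℝ)*P))^2 :=
            sq_le_sq' (by linarith) (by linarith)
          have hFa2 : (F a)^2 ≤ 1 := pow_le_one₀ (F_pos a).le (F_le_one a)
          have h6 : (F a * (θ (b/(P:ℝ)) - θ (a/(P:ℝ))))^2 ≤ (c/((n:ℝ)*P))^2 := by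
            rw [mul_pow]
            calc (F a)^2 * (θ (b/(P:ℝ)) - θ (a/(P:ℝ)))^2
                ≤ 1 * (c/((n:ℝ)*P))^2 :=
                  mul_le_mul hFa2 hsq (sq_nonneg _) zero_le_one
              _ = (c/((n:ℝ)*P))^2 := one_mul _
          calc 3*(n:ℝ)^2 * (F a * (θ (b/(P:ℝ)) - θ (a/(P:ℝ))))^2
              ≤ 3*(n:ℝ)^2 * (c/((n:ℝ)*P))^2 :=
                mul_le_mul_of_nonneg_left h6 (by positivity)
            _ = 3*c^2/(P:ℝ)^2 * ((n:ℝ)^2 * (1/(n:ℝ))^2) := by ring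
            _ = 3*c^2/(P:ℝ)^2 := by rw [hnn2, mul_one]
        · rw [if_neg (fun h => hlt h.2)]
          have hge : ((P*n:ℕ):ℤ) ≤ x := not_lt.1 hlt
          have hgeR : (P:ℝ)*(n:ℝ) ≤ (x:ℝ) := by
            have h7 : ((P*n:ℕ):ℝ) ≤ (x:ℝ) := by exact_mod_cast hge
            push_cast at h7; linarith
          have haP1 : 1 ≤ a/(P:ℝ) := by
            rw [hadef, div_div, le_div_iff₀ (by positivity)]
            linarith
          have hbP1 : 1 ≤ b/(P:ℝ) := le_trans haP1 haPb
          rw [θ_eq_zero haP1, θ_eq_zero hbP1]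
          simp
      have hqbound := hgen M hMpos
      have hrbound := hgen N hNpos
      have hsq3 : (p + q - r)^2 ≤ 3*(p^2 + q^2 + r^2) := by
        have e : 3*(p^2+q^2+r^2) - (p+q-r)^2 = (p-q)^2 + (p+r)^2 + (q+r)^2 := by ring
        linarith [sq_nonneg (p-q), sq_nonneg (p+r), sq_nonneg (q+r), e]
      calc ((n:ℝ) * (FM M b - FM N b - (FM M a - FM N a)))^2
          = (n:ℝ)^2 * (p+q-r)^2 := by rw [hdecomp]; ring
        _ ≤ (n:ℝ)^2 * (3*(p^2+q^2+r^2)) :=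
            mul_le_mul_of_nonneg_left hsq3 (by positivity)
        _ = 3*(n:ℝ)^2*p^2 + (3*(n:ℝ)^2*q^2 + 3*(n:ℝ)^2*r^2) := by ring
        _ ≤ (3*c/(mn:ℝ)) * Real.exp (-a)
            + ((if 0 ≤ x ∧ x < ((M*n : ℕ):ℤ) then 3*c^2/(M:ℝ)^2 else 0)
              + (if 0 ≤ x ∧ x < ((N*n : ℕ):ℤ) then 3*c^2/(N:ℝ)^2 else 0)) := by
            have hq' : 3*(n:ℝ)^2*q^2
                ≤ (if 0 ≤ x ∧ x < ((M*n : ℕ):ℤ) then 3*c^2/(M:ℝ)^2 else 0) := hqbound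
            have hr' : 3*(n:ℝ)^2*r^2
                ≤ (if 0 ≤ x ∧ x < ((N*n : ℕ):ℤ) then 3*c^2/(N:ℝ)^2 else 0) := hrbound
            linarith [hpkey]
  -- final assembly
  have hE : discreteEnergy n (fun x => FM M x - FM N x) = (1/(n:ℝ)) * ∑' x : ℤ, T x := rfl
  rw [hE]
  have hKM₀ : K / M₀ < ε := by
    have h1 : K / ε < (M₀:ℝ) := by
      have h2 : ((M₀':ℕ):ℝ) < (M₀:ℝ) := by
        rw [hM₀def]; push_cast; linarith
      linarith
    rw [div_lt_iff₀ hM₀R]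
    rw [div_lt_iff₀ hε] at h1
    calc K < (M₀:ℝ) * ε := h1
      _ = ε * (M₀:ℝ) := mul_comm _ _
  by_cases hsumT : Summable T
  · have hTle : (∑' x : ℤ, T x) ≤ ∑' x : ℤ, A x := Summable.tsum_le_tsum hbound hsumT hAsum
    calc (1/(n:ℝ)) * ∑' x : ℤ, T x ≤ (1/(n:ℝ)) * ((n:ℝ) * K / M₀) := by
          apply mul_le_mul_of_nonneg_left (le_trans hTle htA) (by positivity)
      _ = K / M₀ := by field_simp
      _ < ε := hKM₀
  · rw [tsum_eq_zero_of_not_summable hsumT]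
    simpa using hε
end
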